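/- arXiv:2107.01756 — 9 statements merged into one kernel-verified Lean document; each statement's English description precedes it below -/
import Mathlib

section
/- Let f = h + conj(g) be a sense-preserving harmonic mapping on the unit disk D. Then the operator A_f(z) = ((1-|z|²)/2)·P_f(z) - conj(z) satisfies the identity A_f(z) = (1-|z|²)·∂_z log((1-|z|²)·J_f(z)^{1/2}) for all z in D, where ∂_z is the Wirtinger derivative and J_f = |h'|² - |g'|² is the Jacobian. -/
open Complex Metric Set

noncomputable section

/-- The open unit disk in ℂ. -/
def 𝔻 : Set ℂ := Metric.ball (0 : ℂ) 1

/-- Dilatation ω = g'/h' of a harmonic mapping f = h + conj g. -/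
def dil (h g : ℂ → ℂ) (z : ℂ) : ℂ := deriv g z / deriv h z

/-- Harmonic pre-Schwarzian P_f = h''/h' - conj(ω)·ω'/(1-|ω|²). -/
def Pf (h g : ℂ → ℂ) (z : ℂ) : ℂ :=
  deriv (deriv h) z / deriv h z -
    (starRingEnd ℂ) (dil h g z) * deriv (dil h g) z /
      (((1 - ‖dil h g z‖ ^ 2 : ℝ) : ℂ))

/-- The operator A_f(z) = ((1-|z|²)/2)·P_f(z) - conj z. -/
def Af (h g : ℂ → ℂ) (z : ℂ) : ℂ :=
  (((1 - ‖z‖ ^ 2 : ℝ) : ℂ)) / 2 * Pf h g z - (starRingEnd ℂ) z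

/-- The operator A_φ for an analytic φ. -/
def Aan (φ : ℂ → ℂ) (z : ℂ) : ℂ :=
  (((1 - ‖z‖ ^ 2 : ℝ) : ℂ)) / 2 * (deriv (deriv φ) z / deriv φ z) -
    (starRingEnd ℂ) z

/-- Jacobian J_f = |h'|² - |g'|². -/
def Jf (h g : ℂ → ℂ) (z : ℂ) : ℝ :=
  ‖deriv h z‖ ^ 2 - ‖deriv g z‖ ^ 2

/-- f = h + conj g is a sense-preserving harmonic mapping on 𝔻. -/
def SensePreserving (h g : ℂ → ℂ) : Prop :=
  (∀ z ∈ 𝔻, AnalyticAt ℂ h z) ∧ (∀ z ∈ 𝔻, AnalyticAt ℂ g z) ∧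
  (∀ z ∈ 𝔻, deriv h z ≠ 0) ∧ (∀ z ∈ 𝔻, ‖dil h g z‖ < 1)

/-- Hyperbolic (Poincaré) distance on 𝔻, with density 1/(1-|z|²). -/
def hypDist (z w : ℂ) : ℝ :=
  (1 / 2) * Real.log
    ((1 + ‖(z - w) / (1 - (starRingEnd ℂ) w * z)‖) /
     (1 - ‖(z - w) / (1 - (starRingEnd ℂ) w * z)‖))

/-- Wirtinger derivative ∂_z of a real-valued function. -/
def wirtinger (u : ℂ → ℝ) (z : ℂ) : ℂ :=
  ((fderiv ℝ u z 1 : ℝ) : ℂ) / 2 - Complex.I * ((fderiv ℝ u z Complex.I : ℝ) : ℂ) / 2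

/-- Derivative of an analytic function is analytic. -/
lemma analyticAt_deriv' {f : ℂ → ℂ} {z : ℂ} (hf : AnalyticAt ℂ f z) :
    AnalyticAt ℂ (deriv f) z :=
  ((ContinuousLinearMap.apply ℂ ℂ (1:ℂ)).analyticAt (fderiv ℂ f z)).comp hf.fderiv

/-- Real Fréchet derivative of |f|² for complex-differentiable f. -/
lemma hasFDerivAt_abs_sq {f : ℂ → ℂ} {f' z : ℂ} (hf : HasDerivAt f f' z) :
    HasFDerivAt (fun w => ‖f w‖ ^ 2)
      (Complex.reCLM.comp ((f z) • (Complex.conjCLE.toContinuousLinearMap.comp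
          (f' • (1 : ℂ →L[ℝ] ℂ))) + ((starRingEnd ℂ) (f z)) • (f' • (1 : ℂ →L[ℝ] ℂ)))) z := by
  have h1 : HasFDerivAt f (f' • (1 : ℂ →L[ℝ] ℂ)) z := hf.complexToReal_fderiv
  have h2 : HasFDerivAt (fun w => (starRingEnd ℂ) (f w))
      (Complex.conjCLE.toContinuousLinearMap.comp (f' • (1 : ℂ →L[ℝ] ℂ))) z :=
    Complex.conjCLE.hasFDerivAt.comp z h1
  have h3 := h1.mul h2
  have h4 := Complex.reCLM.hasFDerivAt.comp z h3
  have heq : (fun w => ‖f w‖ ^ 2)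
      = fun w => Complex.reCLM (f w * (starRingEnd ℂ) (f w)) := by
    funext w; simp [Complex.sq_norm, Complex.mul_conj, Complex.normSq_apply]
  rw [heq]
  exact h4

set_option maxHeartbeats 1000000 in
lemma alg_key (a : ℝ) (zc H G H2 G2 : ℂ) (hH : H ≠ 0)
    (hJ : H * (starRingEnd ℂ) H - G * (starRingEnd ℂ) G ≠ 0) (ha : (a : ℂ) ≠ 0) :
    (a : ℂ) / 2 * (H2 / H - (starRingEnd ℂ) G / (starRingEnd ℂ) H * ((G2 * H - G * H2) / H ^ 2) /
        ((H * (starRingEnd ℂ) H - G * (starRingEnd ℂ) G) / (H * (starRingEnd ℂ) H))) - zc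
      = (a : ℂ) * (-zc / (a : ℂ) + ((starRingEnd ℂ) H * H2 - (starRingEnd ℂ) G * G2) /
          (2 * (H * (starRingEnd ℂ) H - G * (starRingEnd ℂ) G))) := by
  have hcH : (starRingEnd ℂ) H ≠ 0 := by simpa using hH
  have key : (starRingEnd ℂ) G / (starRingEnd ℂ) H * ((G2 * H - G * H2) / H ^ 2) /
        ((H * (starRingEnd ℂ) H - G * (starRingEnd ℂ) G) / (H * (starRingEnd ℂ) H))
      = (starRingEnd ℂ) G * (G2 * H - G * H2) /
          (H * (H * (starRingEnd ℂ) H - G * (starRingEnd ℂ) G)) := by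
    rw [div_div_eq_mul_div]
    field_simp
  rw [key]
  generalize hD : H * (starRingEnd ℂ) H - G * (starRingEnd ℂ) G = D at hJ ⊢
  field_simp
  rw [← hD]
  ring

set_option maxHeartbeats 1600000 in
/-- A_f(z) = (1-|z|²)·∂_z log((1-|z|²)·J_f(z)^{1/2}). -/
theorem stmt_1 (h g : ℂ → ℂ) (hf : SensePreserving h g) :
    ∀ z ∈ 𝔻,
      Af h g z =
        (((1 - ‖z‖ ^ 2 : ℝ) : ℂ)) *
          wirtinger (fun w => Real.log ((1 - ‖w‖ ^ 2) * Real.sqrt (Jf h g w))) z := by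
  obtain ⟨hh, hg, hh', hwlt⟩ := hf
  intro z hz
  have hHa := analyticAt_deriv' (hh z hz)
  have hGa := analyticAt_deriv' (hg z hz)
  have hH2 : HasDerivAt (deriv h) (deriv (deriv h) z) z := hHa.differentiableAt.hasDerivAt
  have hG2 : HasDerivAt (deriv g) (deriv (deriv g) z) z := hGa.differentiableAt.hasDerivAt
  set H := deriv h z with hHdef
  set G := deriv g z with hGdef
  set H2 := deriv (deriv h) z with hH2def
  set G2 := deriv (deriv g) z with hG2def
  have hHne : H ≠ 0 := hh' z hz
  have hHpos : 0 < ‖H‖ := norm_pos_iff.mpr hHne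
  have habslt : ‖G‖ < ‖H‖ := by
    have h1 := hwlt z hz
    rw [dil, norm_div] at h1
    exact (div_lt_one hHpos).mp h1
  have hJpos : 0 < Jf h g z := by
    have := pow_lt_pow_left₀ habslt (norm_nonneg G) (two_ne_zero)
    simpa [Jf] using sub_pos.mpr this
  have ha0 : (0:ℝ) < 1 - ‖z‖ ^ 2 := by
    have hlt : ‖z‖ < 1 := by
      simpa [𝔻] using hz
    nlinarith [norm_nonneg z]
  -- eventual positivity
  have hJc : ContinuousAt (Jf h g) z := by
    have : ContinuousAt (fun w => ‖deriv h w‖ ^ 2 - ‖deriv g w‖ ^ 2) z :=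
      ((hHa.continuousAt.norm).pow 2).sub ((hGa.continuousAt.norm).pow 2)
    exact this
  have hevJ : ∀ᶠ w in nhds z, 0 < Jf h g w :=
    hJc.tendsto.eventually (eventually_gt_nhds hJpos)
  have heva : ∀ᶠ w in nhds z, (0:ℝ) < 1 - ‖w‖ ^ 2 := by
    have hc : ContinuousAt (fun w : ℂ => 1 - ‖w‖ ^ 2) z := by
      have : ContinuousAt (fun w : ℂ => (1:ℝ) - ‖w‖ ^ 2) z :=
        continuousAt_const.sub ((continuous_norm.continuousAt).pow 2)
      exact this
    exact hc.tendsto.eventually (eventually_gt_nhds ha0)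
  have hev : (fun w => Real.log ((1 - ‖w‖ ^ 2) * Real.sqrt (Jf h g w)))
      =ᶠ[nhds z] (fun w => Real.log (1 - ‖w‖ ^ 2) + (1/2) * Real.log (Jf h g w)) := by
    filter_upwards [hevJ, heva] with w h1 h2
    rw [Real.log_mul (ne_of_gt h2) (ne_of_gt (Real.sqrt_pos.mpr h1)), Real.log_sqrt h1.le]
    ring
  -- derivative of the second representative
  have hd1 : HasFDerivAt (fun w : ℂ => 1 - ‖w‖ ^ 2)
      ((0 : ℂ →L[ℝ] ℝ) - (Complex.reCLM.comp ((z) • (Complex.conjCLE.toContinuousLinearMap.comp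
          ((1:ℂ) • (1 : ℂ →L[ℝ] ℂ))) + ((starRingEnd ℂ) z) • ((1:ℂ) • (1 : ℂ →L[ℝ] ℂ))))) z :=
    (hasFDerivAt_const (1:ℝ) z).sub (hasFDerivAt_abs_sq (hasDerivAt_id z))
  have hd2 := hd1.log (ne_of_gt ha0)
  have hdJ : HasFDerivAt (Jf h g)
      ((Complex.reCLM.comp ((H) • (Complex.conjCLE.toContinuousLinearMap.comp
          (H2 • (1 : ℂ →L[ℝ] ℂ))) + ((starRingEnd ℂ) H) • (H2 • (1 : ℂ →L[ℝ] ℂ)))) -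
       (Complex.reCLM.comp ((G) • (Complex.conjCLE.toContinuousLinearMap.comp
          (G2 • (1 : ℂ →L[ℝ] ℂ))) + ((starRingEnd ℂ) G) • (G2 • (1 : ℂ →L[ℝ] ℂ))))) z :=
    (hasFDerivAt_abs_sq hH2).sub (hasFDerivAt_abs_sq hG2)
  have hdJl := (hdJ.log (ne_of_gt hJpos)).const_mul (1/2 : ℝ)
  have hv := hd2.add hdJl
  have hw1 : wirtinger (fun w => Real.log ((1 - ‖w‖ ^ 2) * Real.sqrt (Jf h g w))) z
      = -((starRingEnd ℂ) z) / (((1 - ‖z‖ ^ 2 : ℝ)) : ℂ)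
        + ((starRingEnd ℂ) H * H2 - (starRingEnd ℂ) G * G2) / (2 * ((Jf h g z : ℝ) : ℂ)) := by
    unfold wirtinger
    rw [hev.fderiv_eq, HasFDerivAt.fderiv (f := fun w => Real.log (1 - ‖w‖ ^ 2) + 1 / 2 * Real.log (Jf h g w)) hv]
    simp only [ContinuousLinearMap.add_apply, ContinuousLinearMap.sub_apply,
      ContinuousLinearMap.smul_apply, ContinuousLinearMap.coe_smul', Pi.smul_apply,
      ContinuousLinearMap.coe_comp', Function.comp_apply, ContinuousLinearMap.zero_apply,
      ContinuousLinearMap.one_apply, ContinuousLinearEquiv.coe_coe,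
      Complex.conjCLE_apply, Complex.reCLM_apply, smul_eq_mul]
    set a := 1 - ‖z‖ ^ 2 with hadef
    set j := Jf h g z with hjdef
    have ha : a ≠ 0 := ne_of_gt ha0
    have hj : j ≠ 0 := ne_of_gt hJpos
    rw [Complex.ext_iff]
    constructor <;>
    · simp [Complex.div_re, Complex.div_im, Complex.normSq_apply]
      field_simp
      ring
  rw [hw1]
  have hdil : deriv (dil h g) z = (G2 * H - G * H2) / H ^ 2 := by
    unfold dil
    exact (hGa.differentiableAt.hasDerivAt.div hHa.differentiableAt.hasDerivAt hHne).deriv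
  have hconjH : (starRingEnd ℂ) H ≠ 0 := by
    simpa using hHne
  have hHH : H * (starRingEnd ℂ) H ≠ 0 := mul_ne_zero hHne hconjH
  have e1 : ((‖H‖ : ℝ) : ℂ) ^ 2 = H * (starRingEnd ℂ) H := (Complex.mul_conj' H).symm
  have e2 : ((‖G‖ : ℝ) : ℂ) ^ 2 = G * (starRingEnd ℂ) G := (Complex.mul_conj' G).symm
  have hJcast : ((Jf h g z : ℝ) : ℂ) = H * (starRingEnd ℂ) H - G * (starRingEnd ℂ) G := by
    rw [Jf]; push_cast; rw [e1, e2]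
  have hJJ : H * (starRingEnd ℂ) H - G * (starRingEnd ℂ) G ≠ 0 := by
    rw [← hJcast]; exact Complex.ofReal_ne_zero.mpr (ne_of_gt hJpos)
  have haC : (((1 - ‖z‖ ^ 2 : ℝ)) : ℂ) ≠ 0 := Complex.ofReal_ne_zero.mpr (ne_of_gt ha0)
  have hden : (((1 - ‖dil h g z‖ ^ 2 : ℝ)) : ℂ)
      = (H * (starRingEnd ℂ) H - G * (starRingEnd ℂ) G) / (H * (starRingEnd ℂ) H) := by
    rw [dil, norm_div, div_pow]
    push_cast
    rw [e1, e2]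
    field_simp
  rw [Af, Pf, hdil, hden, hJcast, dil, map_div₀]
  exact alg_key _ _ _ _ _ _ hHne hJJ haC
end
end

section
/- Let f be a sense-preserving harmonic mapping on the unit disk D and let σ be a holomorphic automorphism of D. Then for every z in D, A_{f∘σ}(z) = (σ'(z)/|σ'(z)|)·A_f(σ(z)). -/
open Complex Metric Set

noncomputable section

namespace Stmt3

open Filter Topology

lemma mem_D_iff {z : ℂ} : z ∈ 𝔻 ↔ ‖z‖ < 1 := by
  simp [𝔻, Metric.mem_ball, Complex.dist_eq]

lemma isOpen_D : IsOpen 𝔻 := Metric.isOpen_ball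

/-- Möbius factor. -/
def mob (a z : ℂ) : ℂ := (a - z) / (1 - (starRingEnd ℂ) a * z)

lemma den_ne {a z : ℂ} (ha : ‖a‖ < 1) (hz : ‖z‖ < 1) :
    1 - (starRingEnd ℂ) a * z ≠ 0 := by
  intro hc
  have h1 : (starRingEnd ℂ) a * z = 1 := by linear_combination -hc
  have : ‖(starRingEnd ℂ) a * z‖ < 1 := by
    rw [norm_mul, Complex.norm_conj]
    nlinarith [norm_nonneg a, norm_nonneg z]
  rw [h1] at this; simp at this

lemma normSq_key (a z : ℂ) :
    Complex.normSq (1 - (starRingEnd ℂ) a * z) - Complex.normSq (a - z)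
      = (1 - Complex.normSq a) * (1 - Complex.normSq z) := by
  have : ((Complex.normSq (1 - (starRingEnd ℂ) a * z) - Complex.normSq (a - z) : ℝ) : ℂ)
      = (((1 - Complex.normSq a) * (1 - Complex.normSq z) : ℝ) : ℂ) := by
    push_cast [← Complex.mul_conj]
    simp only [map_sub, map_mul, map_one, Complex.conj_conj]
    ring
  exact_mod_cast this

lemma mob_maps {a z : ℂ} (ha : ‖a‖ < 1) (hz : ‖z‖ < 1) :
    ‖mob a z‖ < 1 := by
  have hden := den_ne ha hz
  have h1 : Complex.normSq (1 - (starRingEnd ℂ) a * z) > 0 :=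
    Complex.normSq_pos.mpr hden
  have h2 := normSq_key a z
  have ha' : Complex.normSq a < 1 := by rw [← Complex.sq_norm]; nlinarith [norm_nonneg a]
  have hz' : Complex.normSq z < 1 := by rw [← Complex.sq_norm]; nlinarith [norm_nonneg z]
  have : Complex.normSq (mob a z) < 1 := by
    rw [mob, Complex.normSq_div]
    rw [div_lt_one h1]
    nlinarith
  rw [← Complex.sq_norm] at this
  nlinarith [norm_nonneg (mob a z)]

lemma mob_invol {a z : ℂ} (ha : ‖a‖ < 1) (hz : ‖z‖ < 1) :
    mob a (mob a z) = z := by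
  have hden := den_ne ha hz
  have hden2 := den_ne ha (mob_maps ha hz)
  have hd : (1 : ℂ) - a * (starRingEnd ℂ) a ≠ 0 := by
    rw [Complex.mul_conj]
    intro hc
    have : Complex.normSq a = 1 := by exact_mod_cast (by linear_combination -hc : ((Complex.normSq a : ℂ)) = 1)
    rw [← Complex.sq_norm] at this; nlinarith [norm_nonneg a]
  rw [mob, mob] at *
  rw [div_eq_iff hden2]
  linear_combination -(div_mul_cancel₀ (a - z) hden)

lemma mob_hasDerivAt (a c z : ℂ) (hden : 1 - (starRingEnd ℂ) a * z ≠ 0) :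
    HasDerivAt (fun w => c * mob a w)
      (c * (a * (starRingEnd ℂ) a - 1) / (1 - (starRingEnd ℂ) a * z) ^ 2) z := by
  have h1 : HasDerivAt (fun w : ℂ => a - w) (-1) z := by
    simpa using (hasDerivAt_id z).const_sub a
  have h2 : HasDerivAt (fun w : ℂ => 1 - (starRingEnd ℂ) a * w) (-(starRingEnd ℂ) a) z := by
    simpa using ((hasDerivAt_id z).const_mul ((starRingEnd ℂ) a)).const_sub 1
  have h3 := (h1.fun_div h2 hden).const_mul c
  exact h3.congr_deriv (by ring)

lemma mob2_hasDerivAt (a c z : ℂ) (hden : 1 - (starRingEnd ℂ) a * z ≠ 0) :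
    HasDerivAt (fun w => c * (a * (starRingEnd ℂ) a - 1) / (1 - (starRingEnd ℂ) a * w) ^ 2)
      (2 * (starRingEnd ℂ) a * c * (a * (starRingEnd ℂ) a - 1) / (1 - (starRingEnd ℂ) a * z) ^ 3)
      z := by
  have h2 : HasDerivAt (fun w : ℂ => 1 - (starRingEnd ℂ) a * w) (-(starRingEnd ℂ) a) z := by
    simpa using ((hasDerivAt_id z).const_mul ((starRingEnd ℂ) a)).const_sub 1
  have h4 : HasDerivAt (fun w : ℂ => (1 - (starRingEnd ℂ) a * w) ^ 2)
      (2 * (1 - (starRingEnd ℂ) a * z) ^ 1 * (-(starRingEnd ℂ) a)) z := by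
    simpa using h2.fun_pow 2
  have h5 : HasDerivAt (fun _ : ℂ => c * (a * (starRingEnd ℂ) a - 1)) 0 z := hasDerivAt_const _ _
  have h6 := h5.fun_div h4 (pow_ne_zero 2 hden)
  refine h6.congr_deriv ?_
  rw [div_eq_div_iff (pow_ne_zero 2 (pow_ne_zero 2 hden)) (pow_ne_zero 3 hden)]
  ring

lemma cast_normSq (x : ℂ) : ((Complex.normSq x : ℝ) : ℂ) = x * (starRingEnd ℂ) x :=
  (Complex.mul_conj x).symm

lemma normSq_lt_one {a : ℂ} (ha : ‖a‖ < 1) : Complex.normSq a < 1 := by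
  rw [← Complex.sq_norm]; nlinarith [norm_nonneg a]

lemma S1_abs {a c z : ℂ} (ha : ‖a‖ < 1) (hc : ‖c‖ = 1)
    (hz : ‖z‖ < 1) :
    ‖c * (a * (starRingEnd ℂ) a - 1) / (1 - (starRingEnd ℂ) a * z) ^ 2‖
      = (1 - Complex.normSq a) / Complex.normSq (1 - (starRingEnd ℂ) a * z) := by
  have h1 : a * (starRingEnd ℂ) a - 1 = ((Complex.normSq a - 1 : ℝ) : ℂ) := by
    push_cast [cast_normSq]; ring
  rw [norm_div, norm_mul, hc, one_mul, h1, Complex.norm_real, Real.norm_eq_abs, norm_pow, Complex.sq_norm,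
    abs_of_neg (by linarith [normSq_lt_one ha])]
  ring_nf

lemma S1_ne {a c z : ℂ} (ha : ‖a‖ < 1) (hc : ‖c‖ = 1)
    (hz : ‖z‖ < 1) :
    c * (a * (starRingEnd ℂ) a - 1) / (1 - (starRingEnd ℂ) a * z) ^ 2 ≠ 0 := by
  intro h
  have := S1_abs ha hc hz
  rw [h, norm_zero] at this
  have h2 : Complex.normSq (1 - (starRingEnd ℂ) a * z) > 0 :=
    Complex.normSq_pos.mpr (den_ne ha hz)
  have h3 := normSq_lt_one ha
  rw [eq_comm, div_eq_zero_iff] at this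
  rcases this with h4 | h4 <;> linarith

lemma factS2 {a c z : ℂ} (ha : ‖a‖ < 1) (hc : ‖c‖ = 1)
    (hz : ‖z‖ < 1) :
    let S1 := c * (a * (starRingEnd ℂ) a - 1) / (1 - (starRingEnd ℂ) a * z) ^ 2
    let S2 := 2 * (starRingEnd ℂ) a * c * (a * (starRingEnd ℂ) a - 1) /
      (1 - (starRingEnd ℂ) a * z) ^ 3
    (((1 - ‖z‖ ^ 2 : ℝ) : ℂ)) / 2 * (S2 / S1) - (starRingEnd ℂ) z
      = -(S1 / ((‖S1‖ : ℝ) : ℂ)) * (starRingEnd ℂ) (c * mob a z) := by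
  intro S1 S2
  have hden : 1 - (starRingEnd ℂ) a * z ≠ 0 := den_ne ha hz
  have hconj : (starRingEnd ℂ) (1 - (starRingEnd ℂ) a * z) = 1 - a * (starRingEnd ℂ) z := by
    simp [map_sub, map_mul]
  have hden' : 1 - a * (starRingEnd ℂ) z ≠ 0 := by
    rw [← hconj]; exact (map_ne_zero _).mpr hden
  have haa : (1 : ℂ) - a * (starRingEnd ℂ) a ≠ 0 := by
    rw [← cast_normSq]
    intro h
    have : (1 : ℂ) = ((Complex.normSq a : ℝ) : ℂ) := by linear_combination h
    have h2 : (1 : ℝ) = Complex.normSq a := by exact_mod_cast this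
    linarith [normSq_lt_one ha]
  have hS1 : S1 ≠ 0 := S1_ne ha hc hz
  have hcc : c * (starRingEnd ℂ) c = 1 := by
    rw [Complex.mul_conj, ← Complex.sq_norm, hc]; norm_num
  have hcast1 : (((1 - ‖z‖ ^ 2 : ℝ)) : ℂ) = 1 - z * (starRingEnd ℂ) z := by
    push_cast [Complex.sq_norm, cast_normSq]
    norm_num
  have habs : ((‖S1‖ : ℝ) : ℂ)
      = (1 - a * (starRingEnd ℂ) a) / ((1 - (starRingEnd ℂ) a * z) * (1 - a * (starRingEnd ℂ) z)) := by
    show ((‖c * (a * (starRingEnd ℂ) a - 1) / (1 - (starRingEnd ℂ) a * z) ^ 2‖ : ℝ) : ℂ) = _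
    rw [S1_abs ha hc hz]
    push_cast [cast_normSq]
    rw [hconj]
  have hcne : c ≠ 0 := fun h => by rw [h, norm_zero] at hc; norm_num at hc
  have haa1 : a * (starRingEnd ℂ) a - 1 ≠ 0 := fun h => haa (by linear_combination -h)
  have e1 : S2 / S1 = 2 * (starRingEnd ℂ) a / (1 - (starRingEnd ℂ) a * z) := by
    show 2 * (starRingEnd ℂ) a * c * (a * (starRingEnd ℂ) a - 1) / (1 - (starRingEnd ℂ) a * z) ^ 3 /
      (c * (a * (starRingEnd ℂ) a - 1) / (1 - (starRingEnd ℂ) a * z) ^ 2) = _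
    rw [div_div_div_eq, div_eq_div_iff (mul_ne_zero (pow_ne_zero 3 hden) (mul_ne_zero hcne haa1)) hden]
    ring
  have e2 : S1 / ((‖S1‖ : ℝ) : ℂ)
      = -(c * (1 - a * (starRingEnd ℂ) z)) / (1 - (starRingEnd ℂ) a * z) := by
    rw [habs]
    show c * (a * (starRingEnd ℂ) a - 1) / (1 - (starRingEnd ℂ) a * z) ^ 2 / _ = _
    field_simp
    ring
  calc (((1 - ‖z‖ ^ 2 : ℝ)) : ℂ) / 2 * (S2 / S1) - (starRingEnd ℂ) z
      = (1 - z * (starRingEnd ℂ) z) / 2 * (2 * (starRingEnd ℂ) a / (1 - (starRingEnd ℂ) a * z))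
        - (starRingEnd ℂ) z := by rw [hcast1, e1]
    _ = ((starRingEnd ℂ) a - (starRingEnd ℂ) z) / (1 - (starRingEnd ℂ) a * z) := by
        rw [eq_div_iff hden]
        linear_combination ((1 - z * (starRingEnd ℂ) z) / 2) * (div_mul_cancel₀ (2 * (starRingEnd ℂ) a) hden)
    _ = (c * (starRingEnd ℂ) c) * ((1 - a * (starRingEnd ℂ) z) * ((starRingEnd ℂ) a - (starRingEnd ℂ) z)
          / ((1 - (starRingEnd ℂ) a * z) * (1 - a * (starRingEnd ℂ) z))) := by
        rw [hcc, one_mul]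
        rw [div_eq_div_iff hden (mul_ne_zero hden hden')]
        ring
    _ = -(S1 / ((‖S1‖ : ℝ) : ℂ)) * (starRingEnd ℂ) (c * mob a z) := by
        rw [e2, mob, map_mul, map_div₀]
        simp only [map_sub, map_mul, map_one, Complex.conj_conj]
        rw [neg_div, neg_neg]
        field_simp

lemma factA {a c z : ℂ} (ha : ‖a‖ < 1) (hc : ‖c‖ = 1)
    (hz : ‖z‖ < 1) :
    (1 - ‖z‖ ^ 2) *
      ‖c * (a * (starRingEnd ℂ) a - 1) / (1 - (starRingEnd ℂ) a * z) ^ 2‖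
      = 1 - ‖c * mob a z‖ ^ 2 := by
  have hden := den_ne ha hz
  have hpos : 0 < Complex.normSq (1 - (starRingEnd ℂ) a * z) := Complex.normSq_pos.mpr hden
  rw [S1_abs ha hc hz]
  have habsw : ‖c * mob a z‖ ^ 2
      = Complex.normSq (a - z) / Complex.normSq (1 - (starRingEnd ℂ) a * z) := by
    rw [Complex.sq_norm, map_mul]
    have : Complex.normSq c = 1 := by rw [← Complex.sq_norm, hc]; norm_num
    rw [this, one_mul, mob, Complex.normSq_div]
  rw [habsw, Complex.sq_norm]
  have hkey := normSq_key a z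
  field_simp
  linarith

lemma sigma_not_const {σ : ℂ → ℂ} (hσb : Set.BijOn σ 𝔻 𝔻) {z₀ : ℂ} (hz₀ : z₀ ∈ 𝔻)
    (h : ∀ᶠ z in 𝓝 z₀, σ z = σ z₀) : False := by
  have h2 : ∀ᶠ z in 𝓝[≠] z₀, (σ z = σ z₀ ∧ z ∈ 𝔻) ∧ z ∈ ({z₀}ᶜ : Set ℂ) :=
    (eventually_nhdsWithin_of_eventually_nhds
      (h.and (isOpen_D.eventually_mem hz₀))).and eventually_mem_nhdsWithin
  obtain ⟨z, ⟨hzeq, hzD⟩, hzne⟩ := h2.exists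
  exact hzne (hσb.injOn hzD hz₀ hzeq)

section Inv

variable {σ : ℂ → ℂ}

/-- Inverse function of `σ` on `𝔻`. -/
def ψ (σ : ℂ → ℂ) : ℂ → ℂ := Function.invFunOn σ 𝔻

lemma psi_mem (hσb : Set.BijOn σ 𝔻 𝔻) {w : ℂ} (hw : w ∈ 𝔻) : ψ σ w ∈ 𝔻 :=
  Function.invFunOn_mem (hσb.surjOn hw)

lemma psi_right (hσb : Set.BijOn σ 𝔻 𝔻) {w : ℂ} (hw : w ∈ 𝔻) : σ (ψ σ w) = w :=
  Function.invFunOn_eq (hσb.surjOn hw)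

lemma psi_left (hσb : Set.BijOn σ 𝔻 𝔻) {z : ℂ} (hz : z ∈ 𝔻) : ψ σ (σ z) = z :=
  hσb.injOn.leftInvOn_invFunOn hz

lemma psi_tendsto (hσa : ∀ z ∈ 𝔻, AnalyticAt ℂ σ z) (hσb : Set.BijOn σ 𝔻 𝔻)
    {w₀ : ℂ} (hw₀ : w₀ ∈ 𝔻) : Filter.Tendsto (ψ σ) (𝓝 w₀) (𝓝 (ψ σ w₀)) := by
  have hz₀ : ψ σ w₀ ∈ 𝔻 := psi_mem hσb hw₀
  have hσz₀ : σ (ψ σ w₀) = w₀ := psi_right hσb hw₀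
  have hopen : 𝓝 w₀ ≤ Filter.map σ (𝓝 (ψ σ w₀)) := by
    rcases (hσa _ hz₀).eventually_constant_or_nhds_le_map_nhds with hconst | hle
    · exact absurd hconst (fun hc => sigma_not_const hσb hz₀ hc)
    · rwa [hσz₀] at hle
  intro U hU
  have hUD : U ∩ 𝔻 ∈ 𝓝 (ψ σ w₀) :=
    Filter.inter_mem hU (isOpen_D.mem_nhds hz₀)
  have himg : σ '' (U ∩ 𝔻) ∈ 𝓝 w₀ := hopen (Filter.image_mem_map hUD)
  rw [Filter.mem_map]
  refine Filter.mem_of_superset himg ?_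
  rintro w ⟨x, ⟨hxU, hxD⟩, rfl⟩
  show ψ σ (σ x) ∈ U
  rw [psi_left hσb hxD]
  exact hxU

lemma deriv_eventually_ne (hσa : ∀ z ∈ 𝔻, AnalyticAt ℂ σ z) (hσb : Set.BijOn σ 𝔻 𝔻)
    {z₀ : ℂ} (hz₀ : z₀ ∈ 𝔻) : ∀ᶠ z in 𝓝[≠] z₀, deriv σ z ≠ 0 := by
  have hσA : AnalyticOnNhd ℂ σ 𝔻 := hσa
  rcases (hσA.deriv _ hz₀).eventually_eq_zero_or_eventually_ne_zero with hzero | hne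
  · exfalso
    obtain ⟨U, hU, hUzero⟩ := hzero.exists_mem
    obtain ⟨ε, hε, hball⟩ := Metric.mem_nhds_iff.1 (Filter.inter_mem hU (isOpen_D.mem_nhds hz₀))
    have hconv : Convex ℝ (Metric.ball z₀ ε) := convex_ball z₀ ε
    have hdiff : DifferentiableOn ℂ σ (Metric.ball z₀ ε) := fun x hx =>
      (hσa x (hball hx).2).differentiableAt.differentiableWithinAt
    have hfder : ∀ x ∈ Metric.ball z₀ ε, fderivWithin ℂ σ (Metric.ball z₀ ε) x = 0 := by
      intro x hx
      rw [fderivWithin_of_isOpen Metric.isOpen_ball hx]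
      have hdx : deriv σ x = 0 := hUzero x (hball hx).1
      ext y
      simp only [ContinuousLinearMap.zero_apply]
      have : fderiv ℂ σ x = ContinuousLinearMap.smulRight (1 : ℂ →L[ℂ] ℂ) (deriv σ x) :=
        by rw [← toSpanSingleton_deriv]; ext; simp
      rw [this, hdx]
      simp
    have h1 : z₀ ∈ Metric.ball z₀ ε := Metric.mem_ball_self hε
    have h2 : z₀ + (ε / 2 : ℝ) ∈ Metric.ball z₀ ε := by
      rw [Metric.mem_ball, dist_eq_norm, add_sub_cancel_left, Complex.norm_real,
        Real.norm_eq_abs, abs_of_pos (by linarith : (0:ℝ) < ε / 2)]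
      linarith
    have heq := hconv.is_const_of_fderivWithin_eq_zero hdiff hfder h2 h1
    have hinj := hσb.injOn (hball h2).2 (hball h1).2 heq
    have : ((ε / 2 : ℝ) : ℂ) = 0 := by linear_combination hinj
    have : (ε / 2 : ℝ) = 0 := by exact_mod_cast this
    linarith
  · exact hne

lemma hasStrictDerivAt_of_analyticAt {f : ℂ → ℂ} {x : ℂ} (hf : AnalyticAt ℂ f x) :
    HasStrictDerivAt f (deriv f x) x := by
  obtain ⟨p, hp⟩ := hf
  have h1 := hp.hasStrictDerivAt
  have h2 : deriv f x = p.coeff 1 := hp.deriv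
  rw [h2]
  exact h1

lemma psi_analytic (hσa : ∀ z ∈ 𝔻, AnalyticAt ℂ σ z) (hσb : Set.BijOn σ 𝔻 𝔻)
    {w₀ : ℂ} (hw₀ : w₀ ∈ 𝔻) : AnalyticAt ℂ (ψ σ) w₀ := by
  have hz₀ : ψ σ w₀ ∈ 𝔻 := psi_mem hσb hw₀
  -- differentiable at good points
  have hdiff_good : ∀ w ∈ 𝔻, deriv σ (ψ σ w) ≠ 0 → DifferentiableAt ℂ (ψ σ) w := by
    intro w hwD hder
    have hx : ψ σ w ∈ 𝔻 := psi_mem hσb hwD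
    have hstrict : HasStrictDerivAt σ (deriv σ (ψ σ w)) (ψ σ w) :=
      hasStrictDerivAt_of_analyticAt (hσa _ hx)
    have hlinv : ∀ᶠ y in 𝓝 (ψ σ w), ψ σ (σ y) = y := by
      filter_upwards [isOpen_D.eventually_mem hx] with y hy
      exact psi_left hσb hy
    have := (hstrict.to_local_left_inverse hder hlinv)
    rw [psi_right hσb hwD] at this
    exact (HasStrictDerivAt.hasDerivAt this).differentiableAt
  -- isolation of bad points
  obtain ⟨V, hV, hVne⟩ := (deriv_eventually_ne hσa hσb hz₀).exists_mem
  obtain ⟨r, hr, hball⟩ := Metric.mem_nhdsWithin_iff.1 hV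
  have hcont : ContinuousAt (ψ σ) w₀ := psi_tendsto hσa hσb hw₀
  have hnear : ∀ᶠ w in 𝓝 w₀, ψ σ w ∈ Metric.ball (ψ σ w₀) r :=
    hcont (Metric.ball_mem_nhds _ hr)
  have hD : ∀ᶠ w in 𝓝 w₀, w ∈ 𝔻 := isOpen_D.eventually_mem hw₀
  have hpunct : ∀ᶠ w in 𝓝[≠] w₀, DifferentiableAt ℂ (ψ σ) w := by
    have h1 : ∀ᶠ w in 𝓝[≠] w₀,
        (ψ σ w ∈ Metric.ball (ψ σ w₀) r ∧ w ∈ 𝔻) ∧ w ∈ ({w₀}ᶜ : Set ℂ) :=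
      (eventually_nhdsWithin_of_eventually_nhds (hnear.and hD)).and eventually_mem_nhdsWithin
    filter_upwards [h1] with w hw
    obtain ⟨⟨hwball, hwD⟩, hwne⟩ := hw
    refine hdiff_good w hwD ?_
    have hψne : ψ σ w ≠ ψ σ w₀ := by
      intro hc
      apply hwne
      have : σ (ψ σ w) = σ (ψ σ w₀) := by rw [hc]
      rw [psi_right hσb hwD, psi_right hσb hw₀] at this
      exact this
    exact hVne _ (hball ⟨hwball, hψne⟩)
  exact Complex.analyticAt_of_differentiable_on_punctured_nhds_of_continuousAt hpunct hcont

lemma deriv_sigma_ne (hσa : ∀ z ∈ 𝔻, AnalyticAt ℂ σ z) (hσb : Set.BijOn σ 𝔻 𝔻)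
    {z : ℂ} (hz : z ∈ 𝔻) : deriv σ z ≠ 0 := by
  have hw : σ z ∈ 𝔻 := hσb.mapsTo hz
  have hcomp : ∀ x ∈ 𝔻, (ψ σ ∘ σ) x = x := fun x hx => psi_left hσb hx
  have hder : deriv (ψ σ ∘ σ) z = 1 := by
    have hev : (ψ σ ∘ σ) =ᶠ[𝓝 z] id :=
      (Set.EqOn.eventuallyEq_of_mem (fun x hx => hcomp x hx) (isOpen_D.mem_nhds hz))
    rw [hev.deriv_eq, deriv_id]
  have hchain : deriv (ψ σ ∘ σ) z = deriv (ψ σ) (σ z) * deriv σ z :=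
    deriv_comp z (psi_analytic hσa hσb hw).differentiableAt (hσa z hz).differentiableAt
  intro hc
  rw [hchain, hc, mul_zero] at hder
  exact one_ne_zero hder.symm

end Inv

lemma mob_zero (a : ℂ) : mob a 0 = a := by simp [mob]

lemma mob_self {a : ℂ} (ha : ‖a‖ < 1) : mob a a = 0 := by
  rw [mob, sub_self, zero_div]

lemma isMobius (σ : ℂ → ℂ) (hσa : ∀ z ∈ 𝔻, AnalyticAt ℂ σ z) (hσb : Set.BijOn σ 𝔻 𝔻) :
    ∃ a c : ℂ, ‖a‖ < 1 ∧ ‖c‖ = 1 ∧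
      Set.EqOn σ (fun w => c * mob a w) 𝔻 := by
  have h0D : (0 : ℂ) ∈ 𝔻 := by rw [mem_D_iff]; simp
  set a := ψ σ 0 with hadef
  have haD : a ∈ 𝔻 := psi_mem hσb h0D
  have ha : ‖a‖ < 1 := mem_D_iff.1 haD
  have hσa0 : σ a = 0 := psi_right hσb h0D
  set τ := fun z => σ (mob a z) with hτdef
  set η := fun w => mob a (ψ σ w) with hηdef
  have hmobD : ∀ z ∈ 𝔻, mob a z ∈ 𝔻 := fun z hz => mem_D_iff.2 (mob_maps ha (mem_D_iff.1 hz))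
  have hτ0 : τ 0 = 0 := by rw [hτdef]; simp only [mob_zero]; exact hσa0
  have hη0 : η 0 = 0 := by rw [hηdef]; simp only [← hadef]; exact mob_self ha
  have hmob_diff : ∀ z ∈ 𝔻, DifferentiableAt ℂ (mob a) z := by
    intro z hz
    have h1 := (mob_hasDerivAt a 1 z (den_ne ha (mem_D_iff.1 hz))).differentiableAt
    have h2 : (fun w => 1 * mob a w) = mob a := by funext w; rw [one_mul]
    rwa [h2] at h1
  have hψdiff : ∀ w ∈ 𝔻, DifferentiableAt ℂ (ψ σ) w := fun w hw =>
    (psi_analytic hσa hσb hw).differentiableAt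
  have hτdiff : DifferentiableOn ℂ τ (Metric.ball 0 1) := by
    intro z hz
    exact (((hσa _ (hmobD z hz)).differentiableAt.comp z (hmob_diff z hz))).differentiableWithinAt
  have hτmaps : Set.MapsTo τ (Metric.ball 0 1) (Metric.ball (τ 0) 1) := by
    intro z hz
    rw [hτ0]
    exact hσb.mapsTo (hmobD z hz)
  have hηdiff : DifferentiableOn ℂ η (Metric.ball 0 1) := fun w hw =>
    ((hmob_diff _ (psi_mem hσb hw)).comp w (hψdiff w hw)).differentiableWithinAt
  have hηmaps : Set.MapsTo η (Metric.ball 0 1) (Metric.ball 0 1) := fun w hw =>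
    hmobD _ (psi_mem hσb hw)
  have hcomp : ∀ z ∈ 𝔻, (η ∘ τ) z = z := by
    intro z hz
    show mob a (ψ σ (σ (mob a z))) = z
    rw [psi_left hσb (hmobD z hz), mob_invol ha (mem_D_iff.1 hz)]
  have hder1 : deriv (η ∘ τ) 0 = 1 := by
    have hEq : Set.EqOn (η ∘ τ) id 𝔻 := fun x hx => hcomp x hx
    rw [(hEq.eventuallyEq_of_mem (isOpen_D.mem_nhds h0D)).deriv_eq, deriv_id]
  have hτd0 : DifferentiableAt ℂ τ 0 :=
    (hσa _ (hmobD 0 h0D)).differentiableAt.comp 0 (hmob_diff 0 h0D)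
  have hηd0 : DifferentiableAt ℂ η (τ 0) := by
    rw [hτ0]
    exact (hmob_diff _ (psi_mem hσb h0D)).comp 0 (hψdiff 0 h0D)
  have hchain : deriv η 0 * deriv τ 0 = 1 := by
    rw [← hder1, deriv_comp 0 hηd0 hτd0, hτ0]
  have hτle : ‖deriv τ 0‖ ≤ 1 := by
    have := Complex.norm_deriv_le_one_of_mapsTo_ball hτdiff (hτmaps.mono_right Metric.ball_subset_closedBall) one_pos
    exact this
  have hηle : ‖deriv η 0‖ ≤ 1 :=
    Complex.norm_deriv_le_one_of_mapsTo_ball hηdiff (by rw [hη0]; exact hηmaps.mono_right Metric.ball_subset_closedBall) one_pos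
  have habs1 : ‖deriv τ 0‖ = 1 := by
    have h7 := congrArg norm hchain
    rw [norm_mul, norm_one] at h7
    nlinarith [norm_nonneg (deriv τ 0), norm_nonneg (deriv η 0)]
  have hslope : ‖dslope τ 0 0‖ = 1 / 1 := by
    rw [dslope_same]
    simpa using habs1
  have heqcase := Complex.affine_of_mapsTo_ball_of_exists_norm_dslope_eq_div hτdiff (hτmaps.mono_right Metric.ball_subset_closedBall)
    (Metric.mem_ball_self one_pos) hslope
  refine ⟨a, deriv τ 0, ha, habs1, ?_⟩
  intro w hw
  have hmw : mob a w ∈ 𝔻 := hmobD w hw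
  have h5 := heqcase hmw
  have h6 : τ (mob a w) = σ w := by
    show σ (mob a (mob a w)) = σ w
    rw [mob_invol ha (mem_D_iff.1 hw)]
  rw [h6] at h5
  rw [h5, hτ0, dslope_same]
  show (0 : ℂ) + (mob a w - 0) • deriv τ 0 = deriv τ 0 * mob a w
  simp [smul_eq_mul, mul_comm]


lemma sigma_facts (σ : ℂ → ℂ) (hσa : ∀ z ∈ 𝔻, AnalyticAt ℂ σ z) (hσb : Set.BijOn σ 𝔻 𝔻) :
    ∀ z ∈ 𝔻, deriv σ z ≠ 0 ∧
      (1 - ‖z‖ ^ 2) * ‖deriv σ z‖ = 1 - ‖σ z‖ ^ 2 ∧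
      (((1 - ‖z‖ ^ 2 : ℝ)) : ℂ) / 2 * (deriv (deriv σ) z / deriv σ z)
          - (starRingEnd ℂ) z
        = -(deriv σ z / ((‖deriv σ z‖ : ℝ) : ℂ)) * (starRingEnd ℂ) (σ z) := by
  obtain ⟨a, c, ha, hc, heq⟩ := isMobius σ hσa hσb
  have hD1 : ∀ z ∈ 𝔻, deriv σ z
      = c * (a * (starRingEnd ℂ) a - 1) / (1 - (starRingEnd ℂ) a * z) ^ 2 := by
    intro z hz
    have hev : σ =ᶠ[𝓝 z] (fun w => c * mob a w) :=
      heq.eventuallyEq_of_mem (isOpen_D.mem_nhds hz)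
    rw [hev.deriv_eq]
    exact (mob_hasDerivAt a c z (den_ne ha (mem_D_iff.1 hz))).deriv
  intro z hz
  have hzlt := mem_D_iff.1 hz
  have hD2 : deriv (deriv σ) z
      = 2 * (starRingEnd ℂ) a * c * (a * (starRingEnd ℂ) a - 1)
        / (1 - (starRingEnd ℂ) a * z) ^ 3 := by
    have h1 : Set.EqOn (deriv σ)
        (fun w => c * (a * (starRingEnd ℂ) a - 1) / (1 - (starRingEnd ℂ) a * w) ^ 2) 𝔻 :=
      fun w hw => hD1 w hw
    rw [(h1.eventuallyEq_of_mem (isOpen_D.mem_nhds hz)).deriv_eq]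
    exact (mob2_hasDerivAt a c z (den_ne ha hzlt)).deriv
  have hσz : σ z = c * mob a z := heq hz
  refine ⟨?_, ?_, ?_⟩
  · rw [hD1 z hz]; exact S1_ne ha hc hzlt
  · rw [hD1 z hz, hσz]; exact factA ha hc hzlt
  · rw [hD1 z hz, hD2, hσz]; exact factS2 ha hc hzlt

end Stmt3

/-- for σ a holomorphic automorphism of 𝔻,
A_{f∘σ}(z) = (σ'(z)/|σ'(z)|)·A_f(σ(z)). -/
theorem stmt_3 (h g : ℂ → ℂ) (hf : SensePreserving h g)
    (σ : ℂ → ℂ) (hσa : ∀ z ∈ 𝔻, AnalyticAt ℂ σ z) (hσb : Set.BijOn σ 𝔻 𝔻) :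
    ∀ z ∈ 𝔻,
      Af (h ∘ σ) (g ∘ σ) z =
        deriv σ z / ((‖deriv σ z‖ : ℝ) : ℂ) * Af h g (σ z) := by
  obtain ⟨hh, hg, hh', hω⟩ := hf
  intro z hz
  have hw : σ z ∈ 𝔻 := hσb.mapsTo hz
  obtain ⟨hD1ne, hA, hB⟩ := Stmt3.sigma_facts σ hσa hσb z hz
  have hσd : ∀ x ∈ 𝔻, DifferentiableAt ℂ σ x := fun x hx => (hσa x hx).differentiableAt
  have hDne : ∀ x ∈ 𝔻, deriv σ x ≠ 0 := fun x hx =>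
    (Stmt3.sigma_facts σ hσa hσb x hx).1
  have hhA : AnalyticOnNhd ℂ h 𝔻 := hh
  have hgA : AnalyticOnNhd ℂ g 𝔻 := hg
  have hσA : AnalyticOnNhd ℂ σ 𝔻 := hσa
  -- first derivatives of compositions, on all of 𝔻
  have E1 : ∀ x ∈ 𝔻, deriv (h ∘ σ) x = deriv h (σ x) * deriv σ x := fun x hx =>
    deriv_comp x (hhA _ (hσb.mapsTo hx)).differentiableAt (hσd x hx)
  have E1g : ∀ x ∈ 𝔻, deriv (g ∘ σ) x = deriv g (σ x) * deriv σ x := fun x hx =>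
    deriv_comp x (hgA _ (hσb.mapsTo hx)).differentiableAt (hσd x hx)
  -- second derivative of h ∘ σ at z
  have E2 : deriv (deriv (h ∘ σ)) z
      = deriv (deriv h) (σ z) * deriv σ z * deriv σ z + deriv h (σ z) * deriv (deriv σ) z := by
    have hev : Set.EqOn (deriv (h ∘ σ)) (fun x => deriv h (σ x) * deriv σ x) 𝔻 :=
      fun x hx => E1 x hx
    rw [(hev.eventuallyEq_of_mem (Stmt3.isOpen_D.mem_nhds hz)).deriv_eq]
    have hd1 : DifferentiableAt ℂ (deriv h ∘ σ) z :=
      ((hhA.deriv _ hw).differentiableAt).comp z (hσd z hz)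
    have hd2 : DifferentiableAt ℂ (deriv σ) z := (hσA.deriv _ hz).differentiableAt
    have hd1' : DifferentiableAt ℂ (fun x => deriv h (σ x)) z := hd1
    rw [deriv_fun_mul hd1' hd2]
    have hcc : deriv (fun x => deriv h (σ x)) z = deriv (deriv h) (σ z) * deriv σ z :=
      deriv_comp z (hhA.deriv _ hw).differentiableAt (hσd z hz)
    rw [hcc]
  -- dilatation transfer
  have E3 : ∀ x ∈ 𝔻, dil (h ∘ σ) (g ∘ σ) x = dil h g (σ x) := by
    intro x hx
    rw [dil, dil, E1 x hx, E1g x hx, mul_div_mul_right _ _ (hDne x hx)]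
  have hdildiff : DifferentiableAt ℂ (dil h g) (σ z) := by
    have h1 : DifferentiableAt ℂ (deriv g) (σ z) := (hgA.deriv _ hw).differentiableAt
    have h2 : DifferentiableAt ℂ (deriv h) (σ z) := (hhA.deriv _ hw).differentiableAt
    exact h1.div h2 (hh' _ hw)
  have E4 : deriv (dil (h ∘ σ) (g ∘ σ)) z = deriv (dil h g) (σ z) * deriv σ z := by
    have hev : Set.EqOn (dil (h ∘ σ) (g ∘ σ)) (dil h g ∘ σ) 𝔻 := fun x hx => E3 x hx
    rw [(hev.eventuallyEq_of_mem (Stmt3.isOpen_D.mem_nhds hz)).deriv_eq]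
    exact deriv_comp z hdildiff (hσd z hz)
  -- abbreviations
  set w := σ z with hwdef
  set u : ℂ := (((1 - ‖z‖ ^ 2 : ℝ)) : ℂ) with hu
  set v : ℂ := (((1 - ‖w‖ ^ 2 : ℝ)) : ℂ) with hv
  set m : ℂ := ((‖deriv σ z‖ : ℝ) : ℂ) with hm
  set D1 := deriv σ z
  set D2 := deriv (deriv σ) z
  set H1 := deriv h w
  set H2 := deriv (deriv h) w
  set W := dil h g w
  set W' := deriv (dil h g) w
  set r : ℂ := (((1 - ‖W‖ ^ 2 : ℝ)) : ℂ) with hr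
  have hH1ne : H1 ≠ 0 := hh' _ hw
  have hrne : r ≠ 0 := by
    rw [hr]
    have := hω _ hw
    intro hcon
    have : (1 - ‖W‖ ^ 2 : ℝ) = 0 := by exact_mod_cast hcon
    nlinarith [norm_nonneg (dil h g w), hω _ hw]
  have hmne : m ≠ 0 := by
    rw [hm]
    simpa using norm_ne_zero_iff.mpr hD1ne
  have hvne : v ≠ 0 := by
    rw [hv]
    intro hcon
    have : (1 - ‖w‖ ^ 2 : ℝ) = 0 := by exact_mod_cast hcon
    have := Stmt3.mem_D_iff.1 hw
    nlinarith [norm_nonneg w]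
  have hDm : D1 / m = u * D1 / v := by
    rw [div_eq_div_iff hmne hvne]
    have hcast : u * m = v := by
      rw [hu, hm, hv, ← Complex.ofReal_mul]
      exact_mod_cast congrArg (fun t : ℝ => (t : ℂ)) hA
    calc D1 * v = (u * m) * D1 := by rw [hcast]; ring
    _ = u * D1 * m := by ring
  have hPf' : Pf (h ∘ σ) (g ∘ σ) z
      = (H2 * D1 * D1 + H1 * D2) / (H1 * D1) - (starRingEnd ℂ) W * (W' * D1) / r := by
    rw [Pf, E2, E1 z hz, E4, E3 z hz]
  have hAf2 : Af h g w = v / 2 * Pf h g w - (starRingEnd ℂ) w := rfl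
  have hPf2 : Pf h g w = H2 / H1 - (starRingEnd ℂ) W * W' / r := rfl
  rw [Af, hPf', hAf2, hPf2]
  have step1 : u / 2 * ((H2 * D1 * D1 + H1 * D2) / (H1 * D1)
        - (starRingEnd ℂ) W * (W' * D1) / r) - (starRingEnd ℂ) z
      = u * D1 / 2 * (H2 / H1 - (starRingEnd ℂ) W * W' / r)
        + (u / 2 * (D2 / D1) - (starRingEnd ℂ) z) := by
    field_simp
    ring
  rw [step1, hB, hDm]
  field_simp
  ring
end
end

section
/- Let f be a sense-preserving harmonic mapping on the unit disk and let L(w) = a·w + b·conj(w) + c be an affine map with a, b, c ∈ ℂ and |b/a| < 1 (a ≠ 0). Then A_{L∘f} = A_f on D; in particular, the pre-Schwarzian satisfies P_{L∘f} = P_f. -/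
open Complex Metric Set

noncomputable section

lemma cast_one_sub_sq_abs (u : ℂ) :
    (((1 - ‖u‖ ^ 2 : ℝ)) : ℂ) = 1 - u * (starRingEnd ℂ) u := by
  rw [Complex.ofReal_sub, Complex.ofReal_one, Complex.sq_norm, Complex.mul_conj]

set_option maxHeartbeats 1000000 in
/-- for an affine map L(w) = a·w + b·conj w + c with |b/a| < 1 (a ≠ 0),
A_{L∘f} = A_f and P_{L∘f} = P_f on 𝔻.  Here L∘f = (a·h + b·g + c) + conj(conj(b)·h + conj(a)·g). -/
theorem stmt_4 (h g : ℂ → ℂ) (hf : SensePreserving h g)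
    (a b c : ℂ) (ha : a ≠ 0) (hb : ‖b / a‖ < 1) :
    ∀ z ∈ 𝔻,
      Af (fun w => a * h w + b * g w + c)
         (fun w => (starRingEnd ℂ) b * h w + (starRingEnd ℂ) a * g w) z = Af h g z ∧
      Pf (fun w => a * h w + b * g w + c)
         (fun w => (starRingEnd ℂ) b * h w + (starRingEnd ℂ) a * g w) z = Pf h g z := by
  obtain ⟨hh, hg, hh', hω⟩ := hf
  intro z hz
  have hbalt : ‖b‖ < ‖a‖ := by
    rw [norm_div] at hb
    have ha' : 0 < ‖a‖ := norm_pos_iff.mpr ha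
    exact (div_lt_one ha').mp hb
  have hden : ∀ u : ℂ, ‖u‖ < 1 → a + b * u ≠ 0 := by
    intro u hu h0
    have h1 : a = -(b * u) := by linear_combination h0
    have h2 : ‖a‖ = ‖b‖ * ‖u‖ := by
      rw [h1]; simp [map_mul]
    have h3 : ‖b‖ * ‖u‖ ≤ ‖b‖ := by
      nlinarith [norm_nonneg b, norm_nonneg u, hu.le]
    linarith
  set Ω : ℂ → ℂ := dil h g with hΩdef
  -- eventual basic facts
  have hev : ∀ᶠ w in nhds z, AnalyticAt ℂ h w ∧ AnalyticAt ℂ g w ∧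
      deriv h w ≠ 0 ∧ ‖Ω w‖ < 1 := by
    have h3 : ∀ᶠ w in nhds z, w ∈ 𝔻 := Metric.isOpen_ball.eventually_mem hz
    filter_upwards [(hh z hz).eventually_analyticAt, (hg z hz).eventually_analyticAt, h3]
      with w hw1 hw2 hw3
    exact ⟨hw1, hw2, hh' w hw3, hω w hw3⟩
  -- eventual formula for deriv of new h
  have EH : deriv (fun w => a * h w + b * g w + c) =ᶠ[nhds z]
      fun w => (a + b * Ω w) * deriv h w := by
    filter_upwards [hev] with w hw
    obtain ⟨hw1, hw2, hw3, _⟩ := hw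
    have d1 : HasDerivAt (fun w => a * h w + b * g w + c)
        (a * deriv h w + b * deriv g w) w :=
      ((hw1.differentiableAt.hasDerivAt.const_mul a).add
        (hw2.differentiableAt.hasDerivAt.const_mul b)).add_const c
    rw [d1.deriv]
    have hgw : deriv g w = Ω w * deriv h w := by
      rw [hΩdef]; unfold dil; rw [div_mul_cancel₀ _ hw3]
    rw [hgw]; ring
  have EG : deriv (fun w => (starRingEnd ℂ) b * h w + (starRingEnd ℂ) a * g w) =ᶠ[nhds z]
      fun w => ((starRingEnd ℂ) b + (starRingEnd ℂ) a * Ω w) * deriv h w := by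
    filter_upwards [hev] with w hw
    obtain ⟨hw1, hw2, hw3, _⟩ := hw
    have d1 : HasDerivAt (fun w => (starRingEnd ℂ) b * h w + (starRingEnd ℂ) a * g w)
        ((starRingEnd ℂ) b * deriv h w + (starRingEnd ℂ) a * deriv g w) w :=
      (hw1.differentiableAt.hasDerivAt.const_mul _).add
        (hw2.differentiableAt.hasDerivAt.const_mul _)
    rw [d1.deriv]
    have hgw : deriv g w = Ω w * deriv h w := by
      rw [hΩdef]; unfold dil; rw [div_mul_cancel₀ _ hw3]
    rw [hgw]; ring
  -- eventual formula for dilatation of L∘f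
  have EΩ : dil (fun w => a * h w + b * g w + c)
      (fun w => (starRingEnd ℂ) b * h w + (starRingEnd ℂ) a * g w) =ᶠ[nhds z]
      fun w => ((starRingEnd ℂ) b + (starRingEnd ℂ) a * Ω w) / (a + b * Ω w) := by
    filter_upwards [EH, EG, hev] with w e1 e2 hw
    obtain ⟨_, _, hw3, hw4⟩ := hw
    show deriv _ w / deriv _ w = _
    rw [e1, e2, mul_div_mul_right _ _ hw3]
  -- derivatives at z
  set W : ℂ := Ω z with hW
  set A : ℂ := deriv h z with hA
  set B : ℂ := deriv (deriv h) z with hB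
  have hAne : A ≠ 0 := hh' z hz
  have hWlt : ‖W‖ < 1 := hω z hz
  have hdW : a + b * W ≠ 0 := hden W hWlt
  have hΩan : AnalyticAt ℂ Ω z := by
    exact (analyticAt_deriv' (hg z hz)).div (analyticAt_deriv' (hh z hz)) hAne
  set W' : ℂ := deriv Ω z with hW'
  have hΩd : HasDerivAt Ω W' z := hΩan.differentiableAt.hasDerivAt
  have hhd2 : HasDerivAt (deriv h) B z := (analyticAt_deriv' (hh z hz)).differentiableAt.hasDerivAt
  -- values at z
  have vH : deriv (fun w => a * h w + b * g w + c) z = (a + b * W) * A := EH.self_of_nhds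
  have vΩ : dil (fun w => a * h w + b * g w + c)
      (fun w => (starRingEnd ℂ) b * h w + (starRingEnd ℂ) a * g w) z
      = ((starRingEnd ℂ) b + (starRingEnd ℂ) a * W) / (a + b * W) := EΩ.self_of_nhds
  -- second derivative
  have vH2 : deriv (deriv (fun w => a * h w + b * g w + c)) z
      = (b * W') * A + (a + b * W) * B := by
    rw [EH.deriv_eq]
    exact (((hΩd.const_mul b).const_add a).mul hhd2).deriv
  -- derivative of new dilatation
  have vΩ' : deriv (dil (fun w => a * h w + b * g w + c)
      (fun w => (starRingEnd ℂ) b * h w + (starRingEnd ℂ) a * g w)) z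
      = (a * (starRingEnd ℂ) a - b * (starRingEnd ℂ) b) * W' / (a + b * W) ^ 2 := by
    rw [EΩ.deriv_eq]
    rw [show (fun w => ((starRingEnd ℂ) b + (starRingEnd ℂ) a * Ω w) / (a + b * Ω w)) =
      (fun w => (starRingEnd ℂ) b + (starRingEnd ℂ) a * Ω w) / (fun w => a + b * Ω w) from rfl]
    rw [(((hΩd.const_mul _).const_add ((starRingEnd ℂ) b)).div
      ((hΩd.const_mul b).const_add a) hdW).deriv]
    ring
  -- notation for conjugates
  set p : ℂ := (starRingEnd ℂ) a with hp
  set q : ℂ := (starRingEnd ℂ) b with hq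
  set V : ℂ := (starRingEnd ℂ) W with hV
  have hdV : p + q * V ≠ 0 := by
    intro h0
    apply hdW
    have : (starRingEnd ℂ) (p + q * V) = 0 := by rw [h0]; simp
    simpa [hp, hq, hV, map_add, map_mul] using this
  have hapbq : a * p - b * q ≠ 0 := by
    intro h0
    have h1 : ‖a‖ ^ 2 = ‖b‖ ^ 2 := by
      have h2 : a * p = b * q := by linear_combination h0
      have h3 : ((‖a‖ ^ 2 : ℝ) : ℂ) = ((‖b‖ ^ 2 : ℝ) : ℂ) := by
        rw [Complex.sq_norm, Complex.sq_norm, ← Complex.mul_conj, ← Complex.mul_conj]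
        exact h2
      exact_mod_cast h3
    nlinarith [norm_nonneg a, norm_nonneg b]
  have h1WV : 1 - W * V ≠ 0 := by
    intro h0
    have h1 : W * V = 1 := by linear_combination -h0
    have h2 : ‖W‖ ^ 2 = 1 := by
      have : ((‖W‖ ^ 2 : ℝ) : ℂ) = 1 := by
        rw [Complex.sq_norm, ← Complex.mul_conj]; exact_mod_cast h1
      exact_mod_cast this
    nlinarith [norm_nonneg W]
  -- the Pf equality
  have hP : Pf (fun w => a * h w + b * g w + c)
      (fun w => (starRingEnd ℂ) b * h w + (starRingEnd ℂ) a * g w) z = Pf h g z := by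
    unfold Pf
    rw [vH, vH2, vΩ, vΩ', cast_one_sub_sq_abs, cast_one_sub_sq_abs]
    rw [← hΩdef, ← hW, ← hA, ← hB, ← hW']
    have hc1 : (starRingEnd ℂ) ((q + p * W) / (a + b * W)) = (b + a * V) / (p + q * V) := by
      rw [map_div₀]
      simp only [map_add, map_mul, hp, hq, hV, Complex.conj_conj]
    rw [hc1]
    have hfac : (1 : ℂ) - (q + p * W) / (a + b * W) * ((b + a * V) / (p + q * V))
        = (a * p - b * q) * (1 - W * V) / ((a + b * W) * (p + q * V)) := by
      rw [div_mul_div_comm, one_sub_div (mul_ne_zero hdW hdV)]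
      ring
    rw [hfac]
    rw [show (starRingEnd ℂ) W = V from rfl]
    field_simp [hAne, hdW, hdV, hapbq, h1WV, show V * q + p ≠ 0 by rwa [add_comm, mul_comm]]
    linear_combination (-(b * W' * A + W' * A * a * V)) *
      mul_inv_cancel₀ (show V * q + p ≠ 0 by rwa [add_comm, mul_comm])
  exact ⟨by unfold Af; rw [hP], hP⟩
end
end

section
/- Let f be a sense-preserving harmonic mapping on the unit disk D. Then the lower order μ(f) := inf_{z∈D} |A_f(z)| satisfies 0 ≤ μ(f) ≤ 3/2. More precisely, for every z in D, |A_f(z)| ≤ |A_h(z)| + 1/2 where h is the analytic part, using the Schwarz–Pick inequality (1-|z|²)|ω'(z)| ≤ 1 - |ω(z)|² for the dilatation ω. -/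
open Complex Metric Set

noncomputable section


/-- Möbius map. -/
def mob (a z : ℂ) : ℂ := (z + a) / (1 + (starRingEnd ℂ) a * z)

lemma mob_den_ne (a z : ℂ) (ha : ‖a‖ < 1) (hz : ‖z‖ < 1) :
    1 + (starRingEnd ℂ) a * z ≠ 0 := by
  intro h
  have h1 : (starRingEnd ℂ) a * z = -1 := by linear_combination h
  have : ‖(starRingEnd ℂ) a * z‖ = 1 := by rw [h1]; simp
  rw [norm_mul, Complex.norm_conj] at this
  nlinarith [norm_nonneg a, norm_nonneg z]

lemma mob_normSq_key (a z : ℂ) :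
    Complex.normSq (1 + (starRingEnd ℂ) a * z) - Complex.normSq (z + a)
      = (1 - Complex.normSq a) * (1 - Complex.normSq z) := by
  simp only [Complex.normSq_apply, Complex.add_re, Complex.add_im, Complex.mul_re,
    Complex.mul_im, Complex.conj_re, Complex.conj_im, Complex.one_re, Complex.one_im]
  ring

lemma mob_mapsTo (a : ℂ) (ha : ‖a‖ < 1) :
    MapsTo (mob a) (ball (0:ℂ) 1) (ball (0:ℂ) 1) := by
  intro z hz
  rw [mem_ball_zero_iff] at hz ⊢
  have hden := mob_den_ne a z ha hz
  have hNa : Complex.normSq a < 1 := by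
    rw [← Complex.sq_norm]; nlinarith [norm_nonneg a]
  have hNz : Complex.normSq z < 1 := by
    rw [← Complex.sq_norm]; nlinarith [norm_nonneg z]
  have key := mob_normSq_key a z
  have hlt : Complex.normSq (z + a) < Complex.normSq (1 + (starRingEnd ℂ) a * z) := by
    nlinarith
  have habs : ‖z + a‖ < ‖1 + (starRingEnd ℂ) a * z‖ := by
    rw [Complex.norm_def, Complex.norm_def]
    exact Real.sqrt_lt_sqrt (Complex.normSq_nonneg _) hlt
  rw [mob, norm_div, div_lt_one (norm_pos_iff.mpr hden)]
  exact habs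

lemma mob_hasDerivAt (a w : ℂ) (hden : 1 + (starRingEnd ℂ) a * w ≠ 0) :
    HasDerivAt (mob a) ((1 - (starRingEnd ℂ) a * a) / (1 + (starRingEnd ℂ) a * w) ^ 2) w := by
  have h1 : HasDerivAt (fun z : ℂ => z + a) 1 w := (hasDerivAt_id w).add_const a
  have h2 : HasDerivAt (fun z : ℂ => 1 + (starRingEnd ℂ) a * z) ((starRingEnd ℂ) a) w := by
    simpa using ((hasDerivAt_id w).const_mul ((starRingEnd ℂ) a)).const_add 1
  have := h1.div h2 hden
  refine this.congr_deriv ?_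
  ring

lemma mob_diffOn (a : ℂ) (ha : ‖a‖ < 1) :
    DifferentiableOn ℂ (mob a) (ball (0:ℂ) 1) := by
  intro z hz
  rw [mem_ball_zero_iff] at hz
  exact (mob_hasDerivAt a z (mob_den_ne a z ha hz)).differentiableAt.differentiableWithinAt

/-- Schwarz–Pick inequality. -/
lemma schwarz_pick {ω : ℂ → ℂ} (hd : DifferentiableOn ℂ ω (ball (0:ℂ) 1))
    (hm : MapsTo ω (ball (0:ℂ) 1) (ball (0:ℂ) 1)) {a : ℂ} (ha : a ∈ ball (0:ℂ) 1) :
    (1 - ‖a‖ ^ 2) * ‖deriv ω a‖ ≤ 1 - ‖ω a‖ ^ 2 := by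
  have haa : ‖a‖ < 1 := by rwa [mem_ball_zero_iff] at ha
  set b := ω a with hb
  have hbb : ‖b‖ < 1 := by
    have := hm ha; rwa [mem_ball_zero_iff] at this
  have hbn : ‖-b‖ < 1 := by simpa using hbb
  -- Möbius maps
  have hφ0 : mob a 0 = a := by simp [mob]
  have hψb : mob (-b) b = 0 := by
    rw [mob]
    have : b + -b = 0 := by ring
    rw [this, zero_div]
  -- composition
  set F := mob (-b) ∘ ω ∘ mob a with hF
  have hmapsF : MapsTo F (ball (0:ℂ) 1) (ball (0:ℂ) 1) :=
    (mob_mapsTo (-b) hbn).comp (hm.comp (mob_mapsTo a haa))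
  have hdiffF : DifferentiableOn ℂ F (ball (0:ℂ) 1) :=
    (mob_diffOn (-b) hbn).comp (hd.comp (mob_diffOn a haa) (mob_mapsTo a haa))
      (hm.comp (mob_mapsTo a haa))
  have hF0 : F 0 = 0 := by
    rw [hF]; simp only [Function.comp_apply, hφ0, ← hb, hψb]
  -- derivative of F at 0
  have hden0 : 1 + (starRingEnd ℂ) a * (0:ℂ) ≠ 0 := by simp
  have hdenb : 1 + (starRingEnd ℂ) (-b) * b ≠ 0 := by
    intro hc
    have : (starRingEnd ℂ) b * b = 1 := by
      rw [map_neg] at hc; linear_combination -hc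
    have h2 : ‖(starRingEnd ℂ) b * b‖ = 1 := by rw [this]; simp
    rw [norm_mul, Complex.norm_conj] at h2
    nlinarith [norm_nonneg b]
  have hφ : HasDerivAt (mob a) ((1 - (starRingEnd ℂ) a * a) / (1 + (starRingEnd ℂ) a * 0) ^ 2) 0 :=
    mob_hasDerivAt a 0 hden0
  have hω : HasDerivAt ω (deriv ω a) (mob a 0) := by
    rw [hφ0]
    exact (hd.differentiableAt (isOpen_ball.mem_nhds ha)).hasDerivAt
  have hψ : HasDerivAt (mob (-b))
      ((1 - (starRingEnd ℂ) (-b) * (-b)) / (1 + (starRingEnd ℂ) (-b) * b) ^ 2) ((ω ∘ mob a) 0) := by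
    have : (ω ∘ mob a) 0 = b := by simp [hφ0, hb]
    rw [this]
    exact mob_hasDerivAt (-b) b hdenb
  have hFd : HasDerivAt F
      ((1 - (starRingEnd ℂ) (-b) * (-b)) / (1 + (starRingEnd ℂ) (-b) * b) ^ 2 *
        (deriv ω a * ((1 - (starRingEnd ℂ) a * a) / (1 + (starRingEnd ℂ) a * 0) ^ 2))) 0 :=
    hψ.comp 0 (hω.comp 0 hφ)
  have hSch : ‖deriv F 0‖ ≤ 1 :=
    Complex.norm_deriv_le_one_of_mapsTo_ball hdiffF (by rw [hF0]; exact hmapsF.mono_right ball_subset_closedBall) one_pos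
  rw [hFd.deriv] at hSch
  -- simplify
  have e1 : (starRingEnd ℂ) a * a = ((‖a‖ ^ 2 : ℝ) : ℂ) := by
    rw [mul_comm, Complex.mul_conj, Complex.sq_norm]
  have e2 : (starRingEnd ℂ) (-b) * (-b) = ((‖b‖ ^ 2 : ℝ) : ℂ) := by
    rw [mul_comm, Complex.mul_conj]
    simp [Complex.sq_norm]
  have e3 : (starRingEnd ℂ) (-b) * b = -(((‖b‖ ^ 2 : ℝ)) : ℂ) := by
    rw [map_neg, neg_mul, mul_comm, Complex.mul_conj, Complex.sq_norm]
  rw [e1, e2, e3] at hSch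
  have hA : (0:ℝ) < 1 - ‖a‖ ^ 2 := by nlinarith [norm_nonneg a]
  have hB : (0:ℝ) < 1 - ‖b‖ ^ 2 := by nlinarith [norm_nonneg b]
  have e4 : (1 : ℂ) - ((‖a‖ ^ 2 : ℝ) : ℂ) = (((1 - ‖a‖ ^ 2 : ℝ)) : ℂ) := by
    push_cast; ring
  have e5 : (1 : ℂ) - ((‖b‖ ^ 2 : ℝ) : ℂ) = (((1 - ‖b‖ ^ 2 : ℝ)) : ℂ) := by
    push_cast; ring
  have e6 : (1 : ℂ) + -(((‖b‖ ^ 2 : ℝ)) : ℂ) = (((1 - ‖b‖ ^ 2 : ℝ)) : ℂ) := by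
    push_cast; ring
  rw [e4, e5, e6] at hSch
  simp only [norm_mul, norm_div, norm_pow, Complex.norm_real, Real.norm_eq_abs, Complex.norm_ofNat] at hSch
  rw [abs_of_pos hA, abs_of_pos hB] at hSch
  have hSch2 : (1 - ‖b‖ ^ 2) / (1 - ‖b‖ ^ 2) ^ 2 *
      (‖deriv ω a‖ * ((1 - ‖a‖ ^ 2) / ‖(1:ℂ) + (starRingEnd ℂ) a * 0‖ ^ 2)) ≤ 1 := hSch
  have e7 : ‖(1:ℂ) + (starRingEnd ℂ) a * 0‖ = 1 := by simp
  rw [e7] at hSch2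
  have hD : (0:ℝ) ≤ ‖deriv ω a‖ := norm_nonneg _
  have key : (1 - ‖b‖ ^ 2)⁻¹ * (‖deriv ω a‖ * (1 - ‖a‖ ^ 2)) ≤ 1 := by
    have : (1 - ‖b‖ ^ 2) / (1 - ‖b‖ ^ 2) ^ 2 = (1 - ‖b‖ ^ 2)⁻¹ := by
      field_simp
    rw [this] at hSch2
    simpa using hSch2
  rw [inv_mul_le_iff₀ hB] at key
  nlinarith [key]


lemma abs_sub_le'' (x y : ℂ) : ‖x - y‖ ≤ ‖x‖ + ‖y‖ := by
  simpa [sub_eq_add_neg] using norm_add_le x (-y)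

set_option maxHeartbeats 1000000 in
/-- 0 ≤ μ(f) ≤ 3/2, and pointwise |A_f(z)| ≤ |A_h(z)| + 1/2.
(The fact inf|A_h| ≤ 1 for the analytic part, due to Pommerenke, is assumed.) -/
theorem stmt_5 (h g : ℂ → ℂ) (hf : SensePreserving h g)
    (hPom : sInf ((fun z => ‖Aan h z‖) '' 𝔻) ≤ 1) :
    (0 ≤ sInf ((fun z => ‖Af h g z‖) '' 𝔻) ∧
     sInf ((fun z => ‖Af h g z‖) '' 𝔻) ≤ 3 / 2) ∧
    (∀ z ∈ 𝔻, ‖Af h g z‖ ≤ ‖Aan h z‖ + 1 / 2) := by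
  
  obtain ⟨hh, hg, hh', hωlt⟩ := hf
  have hDball : 𝔻 = ball (0:ℂ) 1 := rfl
  -- ω = dil h g is differentiable on the disk and maps it to itself
  have hωdiff : DifferentiableOn ℂ (dil h g) (ball (0:ℂ) 1) := by
    intro z hz
    have h1 : AnalyticAt ℂ (deriv g) z := (AnalyticOnNhd.deriv (fun x hx => hg x hx)) z hz
    have h2 : AnalyticAt ℂ (deriv h) z := (AnalyticOnNhd.deriv (fun x hx => hh x hx)) z hz
    exact ((h1.div h2 (hh' z hz)).differentiableAt).differentiableWithinAt
  have hωmaps : MapsTo (dil h g) (ball (0:ℂ) 1) (ball (0:ℂ) 1) := by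
    intro z hz
    rw [mem_ball_zero_iff]
    exact hωlt z hz
  -- the pointwise bound
  have hpt : ∀ z ∈ 𝔻, ‖Af h g z‖ ≤ ‖Aan h z‖ + 1 / 2 := by
    intro z hz
    have hz1 : ‖z‖ < 1 := by
      rwa [hDball, mem_ball_zero_iff] at hz
    have hB1 : ‖dil h g z‖ < 1 := hωlt z hz
    have hsp := schwarz_pick hωdiff hωmaps (hz : z ∈ ball (0:ℂ) 1)
    have hA : (0:ℝ) < 1 - ‖z‖ ^ 2 := by nlinarith [norm_nonneg z]
    have hE : (0:ℝ) < 1 - ‖dil h g z‖ ^ 2 := by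
      nlinarith [norm_nonneg (dil h g z)]
    have decom : Af h g z = Aan h z -
        ((1 - ‖z‖ ^ 2 : ℝ) : ℂ) / 2 *
          ((starRingEnd ℂ) (dil h g z) * deriv (dil h g) z /
            ((1 - ‖dil h g z‖ ^ 2 : ℝ) : ℂ)) := by
      simp only [Af, Pf, Aan]; ring
    have habsT : ‖((1 - ‖z‖ ^ 2 : ℝ) : ℂ) / 2 *
        ((starRingEnd ℂ) (dil h g z) * deriv (dil h g) z /
          ((1 - ‖dil h g z‖ ^ 2 : ℝ) : ℂ))‖
        = (1 - ‖z‖ ^ 2) / 2 *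
          (‖dil h g z‖ * ‖deriv (dil h g) z‖ /
            (1 - ‖dil h g z‖ ^ 2)) := by
      rw [norm_mul, norm_div, norm_div, norm_mul, Complex.norm_conj, Complex.norm_real,
        Complex.norm_real, Complex.norm_two, Real.norm_of_nonneg hA.le, Real.norm_of_nonneg hE.le]
    have hT : (1 - ‖z‖ ^ 2) / 2 *
        (‖dil h g z‖ * ‖deriv (dil h g) z‖ /
          (1 - ‖dil h g z‖ ^ 2)) ≤ 1 / 2 := by
      rw [div_mul_div_comm, div_le_div_iff₀ (by positivity) (by norm_num)]
      have hD0 : (0:ℝ) ≤ ‖deriv (dil h g) z‖ := norm_nonneg _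
      have hB0 : (0:ℝ) ≤ ‖dil h g z‖ := norm_nonneg _
      nlinarith [mul_nonneg hA.le hD0]
    have tri : ‖Af h g z‖ ≤ ‖Aan h z‖ +
        ‖((1 - ‖z‖ ^ 2 : ℝ) : ℂ) / 2 *
          ((starRingEnd ℂ) (dil h g z) * deriv (dil h g) z /
            ((1 - ‖dil h g z‖ ^ 2 : ℝ) : ℂ))‖ := by
      rw [decom]
      exact abs_sub_le'' _ _
    rw [habsT] at tri
    linarith
  have h0D : (0:ℂ) ∈ 𝔻 := by rw [hDball]; exact mem_ball_self one_pos
  have hne1 : ((fun z => ‖Af h g z‖) '' 𝔻).Nonempty := ⟨_, ⟨0, h0D, rfl⟩⟩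
  have hne2 : ((fun z => ‖Aan h z‖) '' 𝔻).Nonempty := ⟨_, ⟨0, h0D, rfl⟩⟩
  have hbdd : BddBelow ((fun z => ‖Af h g z‖) '' 𝔻) := by
    refine ⟨0, ?_⟩
    rintro x ⟨w, hw, rfl⟩
    exact norm_nonneg _
  refine ⟨⟨?_, ?_⟩, hpt⟩
  · apply Real.sInf_nonneg
    rintro x ⟨w, hw, rfl⟩
    exact norm_nonneg _
  · have step : sInf ((fun z => ‖Af h g z‖) '' 𝔻) - 1 / 2 ≤
        sInf ((fun z => ‖Aan h z‖) '' 𝔻) := by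
      apply le_csInf hne2
      rintro y ⟨w, hw, rfl⟩
      have h1 : sInf ((fun z => ‖Af h g z‖) '' 𝔻) ≤ ‖Af h g w‖ :=
        csInf_le hbdd ⟨w, hw, rfl⟩
      have h2 := hpt w hw
      simp only at h1 h2 ⊢
      linarith
    linarith
end
end

section
/- Let L be the harmonic half-plane mapping L = (1/2)(l + k) + conj((1/2)(l - k)), where l(z) = z/(1-z) and k(z) = z/(1-z)². Then A_L(z) = (3/2)·(1 - conj(z))/(1 - z) for every z in the unit disk, and consequently |A_L(z)| = 3/2 for all z, so μ(L) = ‖A_L‖ = 3/2. -/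
open Complex Metric Set

noncomputable section

lemma hasDerivAt_hL (z : ℂ) (hz : (1:ℂ) - z ≠ 0) :
    HasDerivAt (fun w : ℂ => (1/2) * (w / (1 - w) + w / (1 - w) ^ 2)) (1 / (1 - z) ^ 3) z := by
  have d1 : HasDerivAt (fun w : ℂ => w / (1 - w)) (1 / (1 - z) ^ 2) z := by
    have := (hasDerivAt_id z).div ((hasDerivAt_const z (1:ℂ)).sub (hasDerivAt_id z)) hz
    refine this.congr_deriv ?_
    simp only [Pi.sub_apply, Pi.pow_apply, id]
    field_simp
    try ring
  have d2 : HasDerivAt (fun w : ℂ => w / (1 - w) ^ 2) ((1 + z) / (1 - z) ^ 3) z := by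
    have := (hasDerivAt_id z).div
      (((hasDerivAt_const z (1:ℂ)).sub (hasDerivAt_id z)).pow 2) (pow_ne_zero 2 hz)
    refine this.congr_deriv ?_
    simp only [Pi.sub_apply, Pi.pow_apply, id]
    field_simp
    try ring
  have := (d1.add d2).const_mul (1/2 : ℂ)
  refine this.congr_deriv ?_
  field_simp
  try ring

lemma hasDerivAt_gL (z : ℂ) (hz : (1:ℂ) - z ≠ 0) :
    HasDerivAt (fun w : ℂ => (1/2) * (w / (1 - w) - w / (1 - w) ^ 2)) (-z / (1 - z) ^ 3) z := by
  have d1 : HasDerivAt (fun w : ℂ => w / (1 - w)) (1 / (1 - z) ^ 2) z := by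
    have := (hasDerivAt_id z).div ((hasDerivAt_const z (1:ℂ)).sub (hasDerivAt_id z)) hz
    refine this.congr_deriv ?_
    simp only [Pi.sub_apply, Pi.pow_apply, id]
    field_simp
    try ring
  have d2 : HasDerivAt (fun w : ℂ => w / (1 - w) ^ 2) ((1 + z) / (1 - z) ^ 3) z := by
    have := (hasDerivAt_id z).div
      (((hasDerivAt_const z (1:ℂ)).sub (hasDerivAt_id z)).pow 2) (pow_ne_zero 2 hz)
    refine this.congr_deriv ?_
    simp only [Pi.sub_apply, Pi.pow_apply, id]
    field_simp
    try ring
  have := (d1.sub d2).const_mul (1/2 : ℂ)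
  refine this.congr_deriv ?_
  field_simp
  try ring

lemma hasDerivAt_phi (z : ℂ) (hz : (1:ℂ) - z ≠ 0) :
    HasDerivAt (fun w : ℂ => 1 / (1 - w) ^ 3) (3 / (1 - z) ^ 4) z := by
  have := (hasDerivAt_const z (1:ℂ)).div
    (((hasDerivAt_const z (1:ℂ)).sub (hasDerivAt_id z)).pow 3) (pow_ne_zero 3 hz)
  refine this.congr_deriv ?_
  simp only [Pi.sub_apply, Pi.pow_apply, id]
  field_simp
  try ring


/-- for the harmonic half-plane mapping
L = (1/2)(l+k) + conj((1/2)(l-k)), with l(z)=z/(1-z), k(z)=z/(1-z)²,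
A_L(z) = (3/2)(1-conj z)/(1-z), |A_L(z)| = 3/2 on 𝔻, and μ(L) = ‖A_L‖ = 3/2. -/
theorem stmt_6
    (h g : ℂ → ℂ)
    (hh : ∀ z, h z = (1 / 2) * (z / (1 - z) + z / (1 - z) ^ 2))
    (hg : ∀ z, g z = (1 / 2) * (z / (1 - z) - z / (1 - z) ^ 2)) :
    (∀ z ∈ 𝔻,
        Af h g z = (3 / 2 : ℂ) * (1 - (starRingEnd ℂ) z) / (1 - z) ∧
        ‖Af h g z‖ = 3 / 2) ∧
    sInf ((fun z => ‖Af h g z‖) '' 𝔻) = 3 / 2 ∧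
    sSup ((fun z => ‖Af h g z‖) '' 𝔻) = 3 / 2 := by
  have hh' : h = fun z => (1 / 2) * (z / (1 - z) + z / (1 - z) ^ 2) := funext hh
  have hg' : g = fun z => (1 / 2) * (z / (1 - z) - z / (1 - z) ^ 2) := funext hg
  have hdh : ∀ w : ℂ, (1:ℂ) - w ≠ 0 → deriv h w = 1 / (1 - w) ^ 3 := by
    intro w hw; rw [hh']; exact (hasDerivAt_hL w hw).deriv
  have hdg : ∀ w : ℂ, (1:ℂ) - w ≠ 0 → deriv g w = -w / (1 - w) ^ 3 := by
    intro w hw; rw [hg']; exact (hasDerivAt_gL w hw).deriv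
  have hdil : ∀ w : ℂ, (1:ℂ) - w ≠ 0 → dil h g w = -w := by
    intro w hw
    have hp : ((1:ℂ) - w) ^ 3 ≠ 0 := pow_ne_zero 3 hw
    rw [dil, hdh w hw, hdg w hw]
    field_simp
  have hne1 : ∀ z ∈ 𝔻, (1:ℂ) - z ≠ 0 := by
    intro z hz
    have habs : ‖z‖ < 1 := by simpa [𝔻] using hz
    intro e
    have : z = 1 := by linear_combination -e
    simp [this] at habs
  have key : ∀ z ∈ 𝔻, Af h g z = (3 / 2 : ℂ) * (1 - (starRingEnd ℂ) z) / (1 - z) := by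
    intro z hz
    have habs : ‖z‖ < 1 := by simpa [𝔻] using hz
    have hz1 : (1:ℂ) - z ≠ 0 := hne1 z hz
    have hopen : ∀ᶠ w in nhds z, (1:ℂ) - w ≠ 0 := by
      have : IsOpen {w : ℂ | (1:ℂ) - w ≠ 0} :=
        isOpen_ne.preimage (by continuity)
      exact this.eventually_mem hz1
    have ev1 : deriv h =ᶠ[nhds z] fun w => 1 / (1 - w) ^ 3 :=
      hopen.mono fun w hw => hdh w hw
    have ev2 : dil h g =ᶠ[nhds z] fun w => -w :=
      hopen.mono fun w hw => hdil w hw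
    have d2h : deriv (deriv h) z = 3 / (1 - z) ^ 4 := by
      rw [ev1.deriv_eq]; exact (hasDerivAt_phi z hz1).deriv
    have ddil : deriv (dil h g) z = -1 := by
      rw [ev2.deriv_eq]
      simpa using (hasDerivAt_id z).neg.deriv
    have hp3 : ((1:ℂ) - z) ^ 3 ≠ 0 := pow_ne_zero 3 hz1
    have hzn : (1:ℝ) - ‖z‖ ^ 2 ≠ 0 := by nlinarith [norm_nonneg z]
    have hsq : ((‖z‖ ^ 2 : ℝ) : ℂ) = z * (starRingEnd ℂ) z := by
      rw [Complex.sq_norm]; exact (Complex.mul_conj z).symm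
    have hcast : ((1 - ‖z‖ ^ 2 : ℝ) : ℂ) = 1 - z * (starRingEnd ℂ) z := by
      rw [Complex.ofReal_sub, Complex.ofReal_one, hsq]
    have hznC : (1:ℂ) - z * (starRingEnd ℂ) z ≠ 0 := by
      rw [← hcast]
      exact Complex.ofReal_ne_zero.mpr hzn
    rw [Af, Pf, d2h, hdh z hz1, hdil z hz1, ddil]
    rw [show ‖-z‖ = ‖z‖ from norm_neg z]
    rw [hcast, map_neg]
    field_simp
    ring
  have habs2 : ∀ z ∈ 𝔻, ‖Af h g z‖ = 3 / 2 := by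
    intro z hz
    have hz1 : (1:ℂ) - z ≠ 0 := hne1 z hz
    rw [key z hz]
    rw [show (1 - (starRingEnd ℂ) z) = (starRingEnd ℂ) (1 - z) by rw [map_sub, map_one]]
    rw [norm_div, norm_mul, Complex.norm_conj]
    rw [mul_div_assoc, div_self (norm_ne_zero_iff.mpr hz1), mul_one]
    simp [map_div₀]
  have h0 : (0:ℂ) ∈ 𝔻 := by simp [𝔻]
  have himg : (fun z => ‖Af h g z‖) '' 𝔻 = {(3/2 : ℝ)} := by
    apply Set.eq_singleton_iff_nonempty_unique_mem.mpr
    refine ⟨⟨3/2, ⟨0, h0, habs2 0 h0⟩⟩, ?_⟩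
    rintro x ⟨w, hw, rfl⟩
    exact habs2 w hw
  exact ⟨fun z hz => ⟨key z hz, habs2 z hz⟩,
    by rw [himg]; exact csInf_singleton _,
    by rw [himg]; exact csSup_singleton _⟩
end
end

section
/- Let f = h + conj(g) be a sense-preserving harmonic mapping on the unit disk D with dilatation ω, and for |λ| = 1 let f_λ = h + λg. Then for all z in D and all λ with |λ| = 1, the identity A_f(z) = A_{f_λ}(z) - ((λ + conj(ω(z)))/(1 + λω(z)))·((1-|z|²)ω'(z))/(2(1-|ω(z)|²)) holds, where A_{f_λ}(z) = ((1-|z|²)/2)·f_λ''(z)/f_λ'(z) - conj(z). -/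
open Complex Metric Set

noncomputable section

private lemma stmt8_helper (a w c lam p q : ℂ) (hp : p ≠ 0) (hq : q ≠ 0)
    (hrel : lam + c = c * q + lam * p) :
    (lam + c) / q * (a * w) / (2 * p) = a / 2 * (c * w / p) + a / 2 * (lam * w / q) := by
  field_simp
  linear_combination a * w * hrel

private lemma stmt8_aux (a H H2 G2 om c lam : ℂ) (hH : H ≠ 0)
    (h1 : 1 - om * c ≠ 0) (h2 : 1 + lam * om ≠ 0) :
    a / 2 * (H2 / H - c * ((G2 * H - om * H * H2) / H ^ 2) / (1 - om * c))
    = a / 2 * ((H2 + lam * G2) / (H + lam * (om * H)))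
      - (lam + c) / (1 + lam * om) * (a * ((G2 * H - om * H * H2) / H ^ 2)) /
          (2 * (1 - om * c)) := by
  have e0 : H + lam * (om * H) = H * (1 + lam * om) := by ring
  have e1 : (H2 + lam * G2) / (H * (1 + lam * om))
      = H2 / H + lam * ((G2 * H - om * H * H2) / H ^ 2) / (1 + lam * om) := by
    field_simp
    ring
  have e2 := stmt8_helper a ((G2 * H - om * H * H2) / H ^ 2) c lam (1 - om * c)
    (1 + lam * om) h1 h2 (by ring)
  rw [e0]
  linear_combination (-(a/2)) * e1 + e2

/-- for f_λ = h + λg with |λ| = 1,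
A_f(z) = A_{f_λ}(z) - ((λ+conj ω)/(1+λω))·(1-|z|²)ω'(z)/(2(1-|ω|²)). -/
theorem stmt_8 (h g : ℂ → ℂ) (hf : SensePreserving h g) :
    ∀ z ∈ 𝔻, ∀ lam : ℂ, ‖lam‖ = 1 →
      Af h g z =
        Aan (fun w => h w + lam * g w) z -
          ((lam + (starRingEnd ℂ) (dil h g z)) / (1 + lam * dil h g z)) *
            ((((1 - ‖z‖ ^ 2 : ℝ) : ℂ)) * deriv (dil h g) z) /
              (2 * (((1 - ‖dil h g z‖ ^ 2 : ℝ) : ℂ))) := by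
  intro z hz lam hlam
  obtain ⟨hha, hga, hH0, hw⟩ := hf
  have hh := hha z hz
  have hgz := hga z hz
  have hderiv : ∀ f : ℂ → ℂ, AnalyticAt ℂ f z → AnalyticAt ℂ (deriv f) z := by
    intro f hfz
    rcases hfz.eventually_analyticAt.exists_mem with ⟨s, hs, h's⟩
    exact AnalyticOnNhd.deriv (fun w hws => h's w hws) z (mem_of_mem_nhds hs)
  have hdh : AnalyticAt ℂ (deriv h) z := hderiv h hh
  have hdg : AnalyticAt ℂ (deriv g) z := hderiv g hgz
  have hH : deriv h z ≠ 0 := hH0 z hz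
  have habs : ‖dil h g z‖ < 1 := hw z hz
  have hev : deriv (fun w => h w + lam * g w) =ᶠ[nhds z]
      fun w => deriv h w + lam * deriv g w := by
    filter_upwards [hh.eventually_analyticAt, hgz.eventually_analyticAt] with w hw1 hw2
    rw [deriv_fun_add hw1.differentiableAt (hw2.differentiableAt.const_mul lam),
      deriv_const_mul lam hw2.differentiableAt]
  have hd1 : deriv (fun w => h w + lam * g w) z = deriv h z + lam * deriv g z :=
    hev.eq_of_nhds
  have hd2 : deriv (deriv (fun w => h w + lam * g w)) z
      = deriv (deriv h) z + lam * deriv (deriv g) z := by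
    rw [hev.deriv_eq, deriv_fun_add hdh.differentiableAt (hdg.differentiableAt.const_mul lam),
      deriv_const_mul lam hdg.differentiableAt]
  have hdil : deriv (dil h g) z =
      (deriv (deriv g) z * deriv h z - deriv g z * deriv (deriv h) z) / (deriv h z) ^ 2 := by
    show deriv (fun w => deriv g w / deriv h w) z = _
    rw [deriv_fun_div hdg.differentiableAt hdh.differentiableAt hH]
  have h1 : ((1 - ‖dil h g z‖ ^ 2 : ℝ) : ℂ) ≠ 0 := by
    have h0 : (0:ℝ) < 1 - ‖dil h g z‖ ^ 2 := by
      nlinarith [norm_nonneg (dil h g z)]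
    exact_mod_cast h0.ne'
  have h2 : 1 + lam * dil h g z ≠ 0 := by
    intro he
    have h3 : lam * dil h g z = -1 := by linear_combination he
    have h4 : ‖lam * dil h g z‖ = 1 := by rw [h3]; simp
    rw [norm_mul, hlam, one_mul] at h4
    linarith
  have hcast : ((1 - ‖dil h g z‖ ^ 2 : ℝ) : ℂ)
      = 1 - dil h g z * (starRingEnd ℂ) (dil h g z) := by
    rw [Complex.mul_conj]
    push_cast [Complex.sq_norm]
    ring
  have h1' : (1:ℂ) - dil h g z * (starRingEnd ℂ) (dil h g z) ≠ 0 := hcast ▸ h1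
  have hkey : dil h g z * deriv h z = deriv g z := by
    unfold dil; field_simp
  unfold Af Pf Aan
  rw [hd1, hd2, hdil, hcast, ← hkey]
  linear_combination stmt8_aux (((1 - ‖z‖ ^ 2 : ℝ) : ℂ)) (deriv h z)
    (deriv (deriv h) z) (deriv (deriv g) z) (dil h g z)
    ((starRingEnd ℂ) (dil h g z)) lam hH h1' h2
end
end

section
/- Let f be a sense-preserving harmonic mapping on the unit disk D, let 0 ≤ λ ≤ 1, and suppose |P_f(z) - 2/(1-z)| ≤ 2λ/(1-|z|²) for all z ∈ D. Then |A_f(z)| ≥ 1 - λ for all z ∈ D; in particular μ(f) ≥ 1 - λ. -/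
open Complex Metric Set

noncomputable section

lemma aux_sub (a b : ℂ) : ‖b‖ - ‖a‖ ≤ ‖a + b‖ := by
  have h := norm_add_le (a + b) (-a)
  have h2 : a + b + -a = b := by ring
  rw [h2, norm_neg] at h
  linarith

/-- if |P_f(z) - 2/(1-z)| ≤ 2λ/(1-|z|²) on 𝔻 with 0 ≤ λ ≤ 1,
then |A_f(z)| ≥ 1-λ on 𝔻; in particular μ(f) ≥ 1-λ. -/
theorem stmt_10 (h g : ℂ → ℂ) (hf : SensePreserving h g)
    (l : ℝ) (hl0 : 0 ≤ l) (hl1 : l ≤ 1)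
    (hP : ∀ z ∈ 𝔻, ‖Pf h g z - 2 / (1 - z)‖ ≤ 2 * l / (1 - ‖z‖ ^ 2)) :
    (∀ z ∈ 𝔻, 1 - l ≤ ‖Af h g z‖) ∧
    1 - l ≤ sInf ((fun z => ‖Af h g z‖) '' 𝔻) := by
  have main : ∀ z ∈ 𝔻, 1 - l ≤ ‖Af h g z‖ := by
    intro z hz
    have hz1 : ‖z‖ < 1 := by
      simpa [𝔻, Metric.mem_ball, Complex.dist_eq] using hz
    have hpos : (0:ℝ) < 1 - ‖z‖ ^ 2 := by
      nlinarith [norm_nonneg z]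
    have hne : (1:ℂ) - z ≠ 0 := by
      intro h0
      have : z = 1 := by linear_combination -h0
      rw [this] at hz1; simp at hz1
    have hcast : ((1 - ‖z‖ ^ 2 : ℝ) : ℂ) = 1 - z * (starRingEnd ℂ) z := by
      rw [Complex.mul_conj, ← Complex.sq_norm]
      push_cast
      ring
    have hid : Af h g z =
        ((1 - ‖z‖ ^ 2 : ℝ) : ℂ) / 2 * (Pf h g z - 2 / (1 - z)) +
          (1 - (starRingEnd ℂ) z) / (1 - z) := by
      rw [Af, hcast]
      field_simp
      ring
    have habs1 : ‖(1 - (starRingEnd ℂ) z) / (1 - z)‖ = 1 := by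
      rw [norm_div]
      have : (1 : ℂ) - (starRingEnd ℂ) z = (starRingEnd ℂ) (1 - z) := by
        simp
      rw [this, Complex.norm_conj, div_self (norm_ne_zero_iff.mpr hne)]
    have hbound : ‖((1 - ‖z‖ ^ 2 : ℝ) : ℂ) / 2 *
        (Pf h g z - 2 / (1 - z))‖ ≤ l := by
      rw [norm_mul, norm_div]
      have h1 : ‖((1 - ‖z‖ ^ 2 : ℝ) : ℂ)‖ = 1 - ‖z‖ ^ 2 := by
        rw [Complex.norm_real, Real.norm_eq_abs, abs_of_pos hpos]
      have h2 : ‖(2 : ℂ)‖ = 2 := by norm_num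
      rw [h1, h2]
      have := hP z hz
      calc (1 - ‖z‖ ^ 2) / 2 * ‖Pf h g z - 2 / (1 - z)‖
          ≤ (1 - ‖z‖ ^ 2) / 2 * (2 * l / (1 - ‖z‖ ^ 2)) := by
            apply mul_le_mul_of_nonneg_left this (by positivity)
        _ = l := by field_simp
    calc 1 - l
        = ‖(1 - (starRingEnd ℂ) z) / (1 - z)‖ -
            l := by rw [habs1]
      _ ≤ ‖(1 - (starRingEnd ℂ) z) / (1 - z)‖ -
            ‖((1 - ‖z‖ ^ 2 : ℝ) : ℂ) / 2 *
              (Pf h g z - 2 / (1 - z))‖ := by linarith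
      _ ≤ ‖((1 - ‖z‖ ^ 2 : ℝ) : ℂ) / 2 * (Pf h g z - 2 / (1 - z)) +
            (1 - (starRingEnd ℂ) z) / (1 - z)‖ := by
          exact aux_sub _ _
      _ = ‖Af h g z‖ := by rw [hid]
  refine ⟨main, ?_⟩
  apply le_csInf
  · exact ⟨‖Af h g 0‖, 0, by simp [𝔻], rfl⟩
  · rintro b ⟨z, hz, rfl⟩
    exact main z hz
end
end

section
/- For n ≥ 2, the harmonic mapping f(z) = z + (1/n)·conj(z)^n on the unit disk satisfies |A_f(z)| = |z| + ((n-1)/2)·|z|^{2n-3}/(1 + |z|² + |z|⁴ + ⋯ + |z|^{2(n-2)}) for all z ∈ D, and consequently ‖A_f‖ := sup_{z∈D}|A_f(z)| = 3/2. -/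
open Complex Metric Set

noncomputable section

open Filter Topology

lemma my_Ffun_eq (m : ℕ) (r : ℝ) (h0 : 0 ≤ r) (h1 : r < 1) :
    (1 + (1 - r^2)/2 * (((m:ℝ)+1) * r^(2*m)) / (1 - r^(2*m+2))) * r =
      r + ((m:ℝ)+1)/2 * r^(2*m+1) / (∑ k ∈ Finset.range (m+1), r^(2*k)) := by
  set S : ℝ := ∑ k ∈ Finset.range (m+1), r^(2*k) with hSdef
  have hS : 0 < S := Finset.sum_pos' (fun i _ => pow_nonneg h0 _)
    ⟨0, Finset.mem_range.2 (Nat.succ_pos m), by norm_num⟩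
  have h1r : (0:ℝ) < 1 - r^2 := by nlinarith
  have hgeom : (1 - r^2) * S = 1 - r^(2*m+2) := by
    have h2 := geom_sum_mul (r^2) (m+1)
    have hSx : S = ∑ k ∈ Finset.range (m+1), (r^2)^k := by
      simp [hSdef, ← pow_mul]
    rw [hSx]
    have : (r^2)^(m+1) = r^(2*m+2) := by rw [← pow_mul]; ring_nf
    linear_combination -h2 - this
  rw [← hgeom]
  field_simp
  ring

lemma my_pointwise (m : ℕ) (h g : ℂ → ℂ)
    (hh : ∀ z, h z = z)
    (hg : ∀ z, g z = z ^ (2+m) / ((2+m : ℕ) : ℂ)) (z : ℂ) (hz : ‖z‖ < 1) :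
    ‖Af h g z‖ =
      ‖z‖ + ((m:ℝ)+1)/2 * ‖z‖ ^ (2*m+1) /
        (∑ k ∈ Finset.range (m+1), ‖z‖ ^ (2*k)) := by
  have hH : h = fun w => w := funext hh
  have hh' : deriv h = fun _ => (1:ℂ) := by subst hH; funext w; simp
  have hh'' : deriv (deriv h) = fun _ => (0:ℂ) := by rw [hh']; funext w; simp
  have hg' : deriv g = fun w => w ^ (m+1) := by
    have hG : g = fun z => z ^ (2+m) / ((2+m : ℕ) : ℂ) := funext hg
    subst hG
    funext w
    rw [deriv_div_const, deriv_pow_field]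
    have hne : (2 + (m:ℂ)) ≠ 0 := by
      have : ((2+m : ℕ) : ℂ) ≠ 0 := Nat.cast_ne_zero.2 (by omega)
      push_cast at this; exact this
    have he : 2 + m - 1 = m + 1 := by omega
    rw [he]
    push_cast
    rw [mul_comm, mul_div_assoc, div_self hne, mul_one]
  have hdil : dil h g = fun w => w ^ (m+1) := by
    funext w; simp [dil, hh', hg']
  have hdil' : deriv (dil h g) z = ((m:ℂ)+1) * z^m := by
    rw [hdil, deriv_pow_field]; push_cast; ring_nf
  set r := ‖z‖ with hrdef
  have hr0 : 0 ≤ r := norm_nonneg z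
  have hDpos : 0 < 1 - r^(2*m+2) := by
    have : r^(2*m+2) < 1 := pow_lt_one₀ hr0 hz (by omega)
    linarith
  have habsdil : ‖dil h g z‖ = r^(m+1) := by rw [hdil]; simp [hrdef]
  set c : ℝ := (1 - r^2)/2 * (((m:ℝ)+1) * r^(2*m)) / (1 - r^(2*m+2)) with hcdef
  have hnum : (starRingEnd ℂ) (dil h g z) * deriv (dil h g) z =
      ((m:ℂ)+1) * ((r^(2*m) : ℝ):ℂ) * (starRingEnd ℂ) z := by
    have hdilz : dil h g z = z^(m+1) := by rw [hdil]
    rw [hdilz, hdil']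
    simp only [map_pow]
    have hcz : (starRingEnd ℂ) z * z = ((r^2 : ℝ) : ℂ) := by
      rw [mul_comm, Complex.mul_conj, Complex.normSq_eq_norm_sq]
    calc (starRingEnd ℂ) z ^ (m+1) * (((m:ℂ)+1) * z^m)
        = ((m:ℂ)+1) * (((starRingEnd ℂ) z * z)^m * (starRingEnd ℂ) z) := by ring
      _ = ((m:ℂ)+1) * ((r^(2*m) : ℝ):ℂ) * (starRingEnd ℂ) z := by
          rw [hcz]; push_cast; rw [← pow_mul]; ring
  have hD2 : ((1 - r^(2*m+2) : ℝ) : ℂ) ≠ 0 := by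
    rw [Complex.ofReal_ne_zero]; linarith
  have hA : Af h g z = -(((1 + c : ℝ)) : ℂ) * (starRingEnd ℂ) z := by
    rw [Af, Pf, hh'', hh', habsdil, hnum]
    simp only [hcdef]
    have hexp : (r^(m+1))^2 = r^(2*m+2) := by rw [← pow_mul]; ring_nf
    rw [hexp]
    push_cast
    field_simp
    ring
  have hcnn : 0 ≤ c := by
    apply div_nonneg _ hDpos.le
    apply mul_nonneg (by nlinarith) (by positivity)
  rw [hA]
  rw [norm_mul, norm_neg, Complex.norm_real, Real.norm_eq_abs, Complex.norm_conj,
    _root_.abs_of_nonneg (by linarith : (0:ℝ) ≤ 1 + c), ← hrdef, hcdef]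
  exact my_Ffun_eq m r hr0 hz

lemma my_F_le (m : ℕ) (r : ℝ) (h0 : 0 ≤ r) (h1 : r < 1) :
    r + ((m:ℝ)+1)/2 * r^(2*m+1) / (∑ k ∈ Finset.range (m+1), r^(2*k)) < 3/2 := by
  set S : ℝ := ∑ k ∈ Finset.range (m+1), r^(2*k) with hSdef
  have hS : 0 < S := Finset.sum_pos' (fun i _ => pow_nonneg h0 _)
    ⟨0, Finset.mem_range.2 (Nat.succ_pos m), by norm_num⟩
  have hsum : ((m:ℝ)+1) * r^(2*m+1) ≤ S := by
    have := Finset.card_nsmul_le_sum (Finset.range (m+1))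
      (fun k => r^(2*k)) (r^(2*m+1))
      (fun i hi => pow_le_pow_of_le_one h0 h1.le
        (by have := Finset.mem_range.1 hi; omega))
    simpa [nsmul_eq_mul] using this
  have h2 : ((m:ℝ)+1)/2 * r^(2*m+1) / S ≤ 1/2 := by
    rw [div_le_iff₀ hS]; linarith
  linarith

/-- for f(z) = z + (1/n)·conj(z)^n, n ≥ 2,
|A_f(z)| = |z| + ((n-1)/2)|z|^{2n-3}/(1+|z|²+⋯+|z|^{2(n-2)}) and ‖A_f‖ = 3/2. -/
theorem stmt_12 (n : ℕ) (hn : 2 ≤ n)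
    (h g : ℂ → ℂ)
    (hh : ∀ z, h z = z)
    (hg : ∀ z, g z = z ^ n / (n : ℂ)) :
    (∀ z ∈ 𝔻,
        ‖Af h g z‖ =
          ‖z‖ +
            ((n : ℝ) - 1) / 2 * ‖z‖ ^ (2 * n - 3) /
              (∑ k ∈ Finset.range (n - 1), ‖z‖ ^ (2 * k))) ∧
    sSup ((fun z => ‖Af h g z‖) '' 𝔻) = 3 / 2 := by
  obtain ⟨m, rfl⟩ := Nat.exists_eq_add_of_le hn
  have e1 : 2 * (2+m) - 3 = 2*m+1 := by omega
  have e2 : (2+m) - 1 = m + 1 := by omega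
  have e3 : (((2+m : ℕ)) : ℝ) - 1 = (m:ℝ) + 1 := by push_cast; ring
  have hmem : ∀ z : ℂ, z ∈ 𝔻 ↔ ‖z‖ < 1 := by
    intro z; simp [𝔻, Metric.mem_ball, Complex.dist_eq]
  have part1 : ∀ z ∈ 𝔻,
      ‖Af h g z‖ =
        ‖z‖ +
          (((2+m : ℕ) : ℝ) - 1) / 2 * ‖z‖ ^ (2 * (2+m) - 3) /
            (∑ k ∈ Finset.range ((2+m) - 1), ‖z‖ ^ (2 * k)) := by
    intro z hz
    rw [e1, e2, e3]
    exact my_pointwise m h g hh hg z ((hmem z).1 hz)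
  refine ⟨part1, ?_⟩
  set F : ℝ → ℝ := fun r =>
    r + ((m:ℝ)+1)/2 * r^(2*m+1) / (∑ k ∈ Finset.range (m+1), r^(2*k)) with hFdef
  have himg : ∀ z ∈ 𝔻, ‖Af h g z‖ = F (‖z‖) := by
    intro z hz
    exact my_pointwise m h g hh hg z ((hmem z).1 hz)
  have hub : ∀ y ∈ (fun z => ‖Af h g z‖) '' 𝔻, y ≤ 3/2 := by
    rintro y ⟨z, hz, rfl⟩
    show ‖Af h g z‖ ≤ 3/2
    rw [himg z hz]
    exact (my_F_le m (‖z‖) (norm_nonneg z) ((hmem z).1 hz)).le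
  have hbdd : BddAbove ((fun z => ‖Af h g z‖) '' 𝔻) := ⟨3/2, hub⟩
  have hne : ((fun z => ‖Af h g z‖) '' 𝔻).Nonempty :=
    ⟨_, ⟨0, by simp [𝔻], rfl⟩⟩
  have hF1 : F 1 = 3/2 := by
    have : (∑ k ∈ Finset.range (m+1), (1:ℝ)^(2*k)) = (m:ℝ) + 1 := by
      simp
    simp only [hFdef, this]
    simp only [one_pow]
    field_simp
    ring
  have hcont : ContinuousAt F 1 := by
    apply ContinuousAt.add continuousAt_id
    apply ContinuousAt.div (by fun_prop) (by fun_prop)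
    have : (∑ k ∈ Finset.range (m+1), (1:ℝ)^(2*k)) = (m:ℝ) + 1 := by
      simp
    rw [this]
    positivity
  apply le_antisymm (csSup_le hne hub)
  by_contra hlt
  push_neg at hlt
  have htend : Filter.Tendsto F (𝓝[<] (1:ℝ)) (𝓝 (3/2)) := by
    rw [← hF1]
    exact hcont.tendsto.mono_left nhdsWithin_le_nhds
  have hev1 : ∀ᶠ r in 𝓝[<] (1:ℝ),
      sSup ((fun z => ‖Af h g z‖) '' 𝔻) < F r :=
    htend.eventually (eventually_gt_nhds hlt)
  have hev2 : ∀ᶠ r in 𝓝[<] (1:ℝ), r ∈ Set.Ioo (0:ℝ) 1 :=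
    Filter.eventually_of_mem (Ioo_mem_nhdsLT_of_mem (by norm_num)) (fun x hx => hx)
  obtain ⟨r, hr1, hr2⟩ := (hev1.and hev2).exists
  have hrabs : ‖(r:ℂ)‖ = r := by
    rw [Complex.norm_real, Real.norm_eq_abs, _root_.abs_of_pos hr2.1]
  have hzD : (r:ℂ) ∈ 𝔻 := (hmem _).2 (by rw [hrabs]; exact hr2.2)
  have hle : F r ≤ sSup ((fun z => ‖Af h g z‖) '' 𝔻) :=
    le_csSup hbdd ⟨(r:ℂ), hzD, by show ‖Af h g (r:ℂ)‖ = F r; rw [himg _ hzD, hrabs]⟩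
  exact absurd hle (not_le.2 hr1)
end
end

section
/- Let f = h + conj(g) be a sense-preserving harmonic mapping on the unit disk D with dilatation ω, and suppose that for every λ with |λ| = 1, the analytic function f_λ = h + λg satisfies |A_{f_λ}(z)| ≤ 1 for all z (as holds when each f_λ is convex univalent). Then for every z ∈ D, |A_f(z)| + ((1-|z|²)|ω'(z)|)/(2(1-|ω(z)|²)) ≤ 1. In particular ‖A_f‖ ≤ 1. -/
open Complex Metric Set

noncomputable section

lemma align (x w : ℂ) : ∃ μ : ℂ, ‖μ‖ = 1 ∧
    ‖x + μ * w‖ = ‖x‖ + ‖w‖ := by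
  set u : ℂ := if x = 0 then 1 else x / ‖x‖ with hu
  set v : ℂ := if w = 0 then 1 else w / ‖w‖ with hv
  have hua : ‖u‖ = 1 := by
    rw [hu]; split_ifs with hx
    · simp
    · rw [norm_div, Complex.norm_real, norm_norm, div_self (norm_ne_zero_iff.mpr hx)]
  have hva : ‖v‖ = 1 := by
    rw [hv]; split_ifs with hw
    · simp
    · rw [norm_div, Complex.norm_real, norm_norm, div_self (norm_ne_zero_iff.mpr hw)]
  have hx : x = u * (‖x‖ : ℂ) := by
    rw [hu]; split_ifs with hx0
    · simp [hx0]
    · rw [div_mul_cancel₀]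
      exact_mod_cast norm_ne_zero_iff.mpr hx0
  have hw : (starRingEnd ℂ) v * w = (‖w‖ : ℂ) := by
    rw [hv]; split_ifs with hw0
    · simp [hw0]
    · rw [map_div₀, Complex.conj_ofReal, div_mul_eq_mul_div, mul_comm,
        Complex.mul_conj, ← Complex.sq_norm]
      push_cast
      rw [pow_two, mul_div_assoc, div_self, mul_one]
      exact_mod_cast norm_ne_zero_iff.mpr hw0
  refine ⟨u * (starRingEnd ℂ) v, by rw [norm_mul, hua, Complex.norm_conj, hva, one_mul], ?_⟩
  have : x + u * (starRingEnd ℂ) v * w = u * ((‖x‖ + ‖w‖ : ℝ) : ℂ) := by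
    push_cast
    rw [mul_add, ← hx, mul_assoc, hw]
  rw [this, norm_mul, hua, one_mul, Complex.norm_real,
    Real.norm_of_nonneg (by positivity)]


lemma key_id (a a2 w' om cw lam c cz : ℂ) (ha : a ≠ 0)
    (h1 : 1 + lam * om ≠ 0) (hD : 1 - om * cw ≠ 0) :
    c * ((a2 + lam * (w' * a + om * a2)) / (a + lam * (om * a))) - cz =
      (c * (a2 / a - cw * w' / (1 - om * cw)) - cz) +
        (lam + cw) / (1 + lam * om) * (c * w' / (1 - om * cw)) := by
  have hd1 : a + lam * (om * a) ≠ 0 := by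
    have e : a + lam * (om * a) = a * (1 + lam * om) := by ring
    rw [e]; exact mul_ne_zero ha h1
  field_simp
  ring

lemma habs_conj (w : ℂ) : ((1 - ‖w‖ ^ 2 : ℝ) : ℂ) = 1 - w * (starRingEnd ℂ) w := by
  push_cast
  rw [Complex.mul_conj, ← Complex.ofReal_pow, Complex.sq_norm]

theorem main_key (h g : ℂ → ℂ) (hf : SensePreserving h g)
    (hconv : ∀ lam : ℂ, ‖lam‖ = 1 →
      ∀ z ∈ 𝔻, ‖Aan (fun w => h w + lam * g w) z‖ ≤ 1)
    (z : ℂ) (hz : z ∈ 𝔻) :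
    ‖Af h g z‖ +
      (1 - ‖z‖ ^ 2) * ‖deriv (dil h g) z‖ /
        (2 * (1 - ‖dil h g z‖ ^ 2)) ≤ 1 := by
  obtain ⟨hA, hG, hH, hW⟩ := hf
  have hAnh : AnalyticOnNhd ℂ h 𝔻 := hA
  have hAng : AnalyticOnNhd ℂ g 𝔻 := hG
  have hdh : DifferentiableAt ℂ (deriv h) z := ((hAnh.deriv) z hz).differentiableAt
  have hdg : DifferentiableAt ℂ (deriv g) z := ((hAng.deriv) z hz).differentiableAt
  set a := deriv h z with ha_def
  set b := deriv g z with hb_def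
  set a2 := deriv (deriv h) z with ha2_def
  set b2 := deriv (deriv g) z with hb2_def
  have ha : a ≠ 0 := hH z hz
  set om := dil h g z with hom_def
  set w' := deriv (dil h g) z with hw'_def
  have hom : om = b / a := rfl
  have hw0 : ‖om‖ < 1 := hW z hz
  have habsz : ‖z‖ < 1 := by
    simpa [𝔻, mem_ball, Complex.dist_eq] using hz
  -- derivative of the dilatation
  have hdil : w' = (b2 * a - b * a2) / a ^ 2 := by
    have e : dil h g = fun y => deriv g y / deriv h y := rfl
    rw [hw'_def, e, deriv_fun_div hdg hdh ha]
  have hb : b = om * a := by rw [hom, div_mul_cancel₀ _ ha]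
  have hb2 : b2 = w' * a + om * a2 := by
    rw [hdil, hom]
    field_simp
    ring
  -- positivity facts
  have hDpos : (0:ℝ) < 1 - ‖om‖ ^ 2 := by nlinarith [norm_nonneg om]
  have hDC : ((1 - ‖om‖ ^ 2 : ℝ) : ℂ) ≠ 0 := by
    exact_mod_cast ne_of_gt hDpos
  have hD : (1:ℂ) - om * (starRingEnd ℂ) om ≠ 0 := by
    rw [← habs_conj]; exact hDC
  -- choose μ aligning A_f and W
  set c : ℂ := ((1 - ‖z‖ ^ 2 : ℝ) : ℂ) / 2 with hc_def
  set W : ℂ := c * w' / ((1 - ‖om‖ ^ 2 : ℝ) : ℂ) with hW_def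
  obtain ⟨μ, hμ1, hμeq⟩ := align (Af h g z) W
  have hμc : μ * (starRingEnd ℂ) μ = 1 := by
    rw [Complex.mul_conj, ← Complex.sq_norm, hμ1]; norm_num
  have hden : (1:ℂ) - μ * om ≠ 0 := by
    intro hcon
    have : ‖μ * om‖ = 1 := by
      have : μ * om = 1 := by linear_combination -hcon
      rw [this]; simp
    rw [norm_mul, hμ1, one_mul] at this
    exact absurd this (ne_of_lt hw0)
  set lam : ℂ := (μ - (starRingEnd ℂ) om) / (1 - μ * om) with hlam_def
  have hlam1 : ‖lam‖ = 1 := by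
    have hnum : μ - (starRingEnd ℂ) om = μ * (starRingEnd ℂ) (1 - μ * om) := by
      rw [map_sub, map_mul, map_one]
      linear_combination ((starRingEnd ℂ) om) * hμc
    rw [hlam_def, norm_div, hnum, norm_mul, hμ1, one_mul, Complex.norm_conj,
      div_self (norm_ne_zero_iff.mpr hden)]
  have h1 : (1:ℂ) + lam * om ≠ 0 := by
    have e : (1:ℂ) + lam * om = (1 - om * (starRingEnd ℂ) om) / (1 - μ * om) := by
      rw [hlam_def]; field_simp; ring
    rw [e]
    exact div_ne_zero hD (sub_ne_zero.mpr fun hcon => hden (by rw [hcon]; ring))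
  have hσ : (lam + (starRingEnd ℂ) om) / (1 + lam * om) = μ := by
    rw [div_eq_iff h1, hlam_def]
    field_simp
    ring
  -- derivatives of f_lam
  have hmem : ∀ᶠ w in nhds z, w ∈ 𝔻 := (Metric.isOpen_ball).eventually_mem hz
  have hev : deriv (fun w => h w + lam * g w) =ᶠ[nhds z]
      fun w => deriv h w + lam * deriv g w := by
    filter_upwards [hmem] with w hw
    rw [deriv_fun_add ((hA w hw).differentiableAt)
        (((hG w hw).differentiableAt).const_mul lam),
      deriv_const_mul lam ((hG w hw).differentiableAt)]
  have d1 : deriv (fun w => h w + lam * g w) z = a + lam * b := by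
    rw [deriv_fun_add ((hA z hz).differentiableAt) (((hG z hz).differentiableAt).const_mul lam),
      deriv_const_mul lam ((hG z hz).differentiableAt)]
  have d2 : deriv (deriv (fun w => h w + lam * g w)) z = a2 + lam * b2 := by
    rw [hev.deriv_eq, deriv_fun_add hdh (hdg.const_mul lam), deriv_const_mul lam hdg]
  -- the key identity
  have hid : Aan (fun w => h w + lam * g w) z = Af h g z + μ * W := by
    rw [← hσ, hW_def]
    simp only [Aan, Af, Pf, ← hom_def, ← hw'_def, ← ha2_def, ← ha_def, ← hc_def]
    rw [d1, d2, habs_conj om, hb, hb2]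
    exact key_id a a2 w' om _ lam _ _ ha h1 hD
  have hb1 : ‖Aan (fun w => h w + lam * g w) z‖ ≤ 1 := hconv lam hlam1 z hz
  rw [hid, hμeq] at hb1
  have hWabs : ‖W‖ = (1 - ‖z‖ ^ 2) * ‖w'‖ /
      (2 * (1 - ‖om‖ ^ 2)) := by
    rw [hW_def, hc_def, norm_div, norm_mul, norm_div, Complex.norm_real,
      Complex.norm_real, Complex.norm_two,
      Real.norm_of_nonneg (by nlinarith [norm_nonneg z] : (0:ℝ) < 1 - ‖z‖ ^ 2).le,
      Real.norm_of_nonneg hDpos.le, div_mul_eq_mul_div, div_div]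
  rw [← hWabs]
  exact hb1

/-- if |A_{f_λ}| ≤ 1 on 𝔻 for every |λ| = 1 (as when each f_λ is convex
univalent), then |A_f(z)| + (1-|z|²)|ω'(z)|/(2(1-|ω(z)|²)) ≤ 1 on 𝔻; in particular ‖A_f‖ ≤ 1. -/
theorem stmt_13 (h g : ℂ → ℂ) (hf : SensePreserving h g)
    (hconv : ∀ lam : ℂ, ‖lam‖ = 1 →
      ∀ z ∈ 𝔻, ‖Aan (fun w => h w + lam * g w) z‖ ≤ 1) :
    (∀ z ∈ 𝔻,
        ‖Af h g z‖ +
          (1 - ‖z‖ ^ 2) * ‖deriv (dil h g) z‖ /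
            (2 * (1 - ‖dil h g z‖ ^ 2)) ≤ 1) ∧
    sSup ((fun z => ‖Af h g z‖) '' 𝔻) ≤ 1 := by
  refine ⟨fun z hz => main_key h g hf hconv z hz, ?_⟩
  apply Real.sSup_le
  · rintro x ⟨z, hz, rfl⟩
    have h1 := main_key h g hf hconv z hz
    have habsz : ‖z‖ < 1 := by
      simpa [𝔻, mem_ball, Complex.dist_eq] using hz
    have hw0 := hf.2.2.2 z hz
    have hnn : 0 ≤ (1 - ‖z‖ ^ 2) * ‖deriv (dil h g) z‖ /
        (2 * (1 - ‖dil h g z‖ ^ 2)) := by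
      apply div_nonneg
      · exact mul_nonneg (by nlinarith [norm_nonneg z]) (norm_nonneg _)
      · nlinarith [norm_nonneg (dil h g z)]
    linarith
  · norm_num
end
end
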